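/- arXiv:1707.08026 — 6 statements merged into one kernel-verified Lean document; each statement's English description precedes it below -/
import Mathlib

section
/- Adding a simplicial vertex to a graph does not increase its toughness; that is, if G⁺ is obtained from a graph G by adding a vertex whose neighbourhood in G⁺ induces a complete graph, then the toughness of G⁺ is at most the toughness of G. -/
open SimpleGraph

/-- `t < toughness of G`: for every vertex cut `X` (a set whose removal leaves
more than one connected component), `t * (number of components of G - X) < |X|`. -/
def SimpleGraph.ToughnessGT {V : Type*} [Fintype V] (G : SimpleGraph V) (t : ℝ) : Prop :=
  ∀ X : Set V, 1 < Nat.card (G.induce Xᶜ).ConnectedComponent →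
    t * Nat.card (G.induce Xᶜ).ConnectedComponent < X.ncard

/-- `G` is `t`-tough: for every vertex cut `X`, `t * (number of components) ≤ |X|`. -/
def SimpleGraph.ToughGE {V : Type*} [Fintype V] (G : SimpleGraph V) (t : ℝ) : Prop :=
  ∀ X : Set V, 1 < Nat.card (G.induce Xᶜ).ConnectedComponent →
    t * Nat.card (G.induce Xᶜ).ConnectedComponent ≤ X.ncard

/-- `G` is a `k`-tree: it can be built from `K_k` by repeatedly adding a vertex
whose neighbourhood among the previously added vertices is a `k`-clique. -/
def SimpleGraph.IsKTree {V : Type*} [Fintype V] (k : ℕ) (G : SimpleGraph V) : Prop :=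
  k ≤ Fintype.card V ∧
    ∃ e : V ≃ Fin (Fintype.card V),
      ∀ v : V, G.IsClique {w : V | G.Adj v w ∧ e w < e v} ∧
        Set.ncard {w : V | G.Adj v w ∧ e w < e v} = min (e v : ℕ) k

/-- The bud of a vertex `v` in a `k`-tree: its neighbours of degree `k`. -/
def SimpleGraph.bud {V : Type*} (G : SimpleGraph V) (k : ℕ) (v : V) : Set V :=
  {w : V | G.Adj v w ∧ (G.neighborSet w).ncard = k}

/-- `v` is a twig of the `k`-tree `G`: `v` is not universal, the set `S` of its
neighbours of degree `k` is nonempty, and `N(v) \ S` induces `K_k`. -/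
def SimpleGraph.IsTwig {V : Type*} (G : SimpleGraph V) (k : ℕ) (v : V) : Prop :=
  (∃ w, w ≠ v ∧ ¬ G.Adj v w) ∧ (G.bud k v).Nonempty ∧
    G.IsClique (G.neighborSet v \ G.bud k v) ∧ (G.neighborSet v \ G.bud k v).ncard = k

/-- `S` is a squeeze by `v`. -/
def SimpleGraph.IsSqueeze {V : Type*} (G : SimpleGraph V) (v : V) (S : Set V) : Prop :=
  S ⊆ G.neighborSet v ∧ 1 ≤ S.ncard ∧ S.ncard ≤ 2 ∧
    2 ≤ (G.neighborSet v \ S).ncard ∧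
    (∀ s ∈ S, (G.neighborSet v \ S).ncard - 1 ≤ ((G.neighborSet v \ S) ∩ G.neighborSet s).ncard) ∧
    (∀ r ∈ G.neighborSet v \ S, S.ncard - 1 ≤ (S ∩ G.neighborSet r).ncard)

/-- A chordal graph: every cycle of length at least 4 has a chord, i.e. an edge of `G`
between two vertices of the cycle that is not an edge of the cycle. -/
def SimpleGraph.IsChordal {V : Type*} (G : SimpleGraph V) : Prop :=
  ∀ (v : V) (c : G.Walk v v), c.IsCycle → 4 ≤ c.length →
    ∃ x y, x ∈ c.support ∧ y ∈ c.support ∧ G.Adj x y ∧ s(x, y) ∉ c.edges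

/-- `H` is a minor of `G`, witnessed by branch sets. -/
def SimpleGraph.HasMinor {V W : Type*} (G : SimpleGraph V) (H : SimpleGraph W) : Prop :=
  ∃ f : W → Set V, (∀ w, (f w).Nonempty) ∧ (∀ w, (G.induce (f w)).Connected) ∧
    (Pairwise (Function.onFun Disjoint f)) ∧
    ∀ w₁ w₂, H.Adj w₁ w₂ → ∃ a ∈ f w₁, ∃ b ∈ f w₂, G.Adj a b

/-- Planarity, via Wagner's theorem: no `K₅` or `K_{3,3}` minor. -/
def SimpleGraph.IsPlanar {V : Type*} (G : SimpleGraph V) : Prop :=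
  ¬ G.HasMinor (completeGraph (Fin 5)) ∧ ¬ G.HasMinor (completeBipartiteGraph (Fin 3) (Fin 3))

/-- `G` is `k`-connected. -/
def SimpleGraph.IsKConnected {V : Type*} [Fintype V] (k : ℕ) (G : SimpleGraph V) : Prop :=
  k + 1 ≤ Fintype.card V ∧ ∀ X : Set V, X.ncard < k → (G.induce Xᶜ).Connected

/-- The square of a graph: two vertices are adjacent iff their distance is 1 or 2. -/
def SimpleGraph.square {V : Type*} (G : SimpleGraph V) : SimpleGraph V where
  Adj v w := v ≠ w ∧ (G.Adj v w ∨ ∃ u, G.Adj v u ∧ G.Adj u w)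
  symm := by
    constructor
    rintro v w ⟨hne, h | ⟨u, h1, h2⟩⟩
    · exact ⟨hne.symm, Or.inl h.symm⟩
    · exact ⟨hne.symm, Or.inr ⟨u, h2.symm, h1.symm⟩⟩
  loopless := by constructor; rintro v ⟨hne, -⟩; exact hne rfl

/-- `G` is Hamilton-connected. -/
def SimpleGraph.IsHamiltonConnected {V : Type*} (G : SimpleGraph V) : Prop :=
  ∀ x y : V, x ≠ y → ∃ p : G.Walk x y, p.IsPath ∧ ∀ w, w ∈ p.support


/-- The toughness of a graph, as an extended nonneg real; it is `⊤` for complete graphs. -/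
noncomputable def SimpleGraph.toughness {V : Type*} [Fintype V] (G : SimpleGraph V) : ENNReal :=
  ⨅ X ∈ {X : Set V | 1 < Nat.card (G.induce Xᶜ).ConnectedComponent},
    (X.ncard : ENNReal) / (Nat.card (G.induce Xᶜ).ConnectedComponent : ENNReal)

/-- If `u` is simplicial, walks can avoid `u`. -/
lemma simplicial_shortcut {W : Type*} (H : SimpleGraph W) (u : W)
    (hc : H.IsClique (H.neighborSet u)) :
    ∀ n : ℕ, ∀ a b : W, ∀ w : H.Walk a b, w.length ≤ n → a ≠ u → b ≠ u →
      ∃ w' : H.Walk a b, u ∉ w'.support := by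
  intro n
  induction n with
  | zero =>
    intro a b w hw ha _
    cases w with
    | nil => exact ⟨.nil, by simp [Ne.symm ha]⟩
    | cons h p => simp at hw
  | succ n ih =>
    intro a b w hw ha hb
    cases w with
    | nil => exact ⟨.nil, by simp [Ne.symm ha]⟩
    | cons h p =>
      rename_i c
      by_cases hcu : c = u
      · cases p with
        | nil => exact absurd hcu hb
        | cons h2 q =>
          rename_i d
          have h2u : H.Adj u d := hcu ▸ h2
          have hau : H.Adj a u := hcu ▸ h
          have hdu : d ≠ u := h2u.ne'
          by_cases had : a = d
          · subst had
            exact ih a b q (by simp [SimpleGraph.Walk.length_cons] at hw; omega) ha hb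
          · have hadj : H.Adj a d := hc hau.symm h2u had
            obtain ⟨w', hw'⟩ := ih d b q (by simp [SimpleGraph.Walk.length_cons] at hw; omega) hdu hb
            exact ⟨.cons hadj w', by simp [Walk.support_cons, hw', Ne.symm ha]⟩
      · obtain ⟨w', hw'⟩ := ih c b p (by simp [SimpleGraph.Walk.length_cons] at hw; omega) hcu hb
        exact ⟨.cons h w', by simp [Walk.support_cons, hw', Ne.symm ha]⟩

theorem toughness_add_simplicial_le {V : Type*} [Fintype V] [DecidableEq V]
    (Gp : SimpleGraph V) (v : V) (hsimp : Gp.IsClique (Gp.neighborSet v)) :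
    Gp.toughness ≤ (Gp.induce {x : V | x ≠ v}).toughness := by
  set S : Set V := {x : V | x ≠ v} with hS
  set G : SimpleGraph S := Gp.induce S with hG
  refine le_iInf₂ fun X hX => ?_
  set X' : Set V := Subtype.val '' X with hX'
  have hcard : X'.ncard = X.ncard := Set.ncard_image_of_injective X Subtype.val_injective
  have hvX' : v ∈ X'ᶜ := by
    rintro ⟨a, _, ha⟩
    exact a.2 ha
  have memX' : ∀ (x : V) (hxS : x ∈ S), (⟨x, hxS⟩ : S) ∈ Xᶜ → x ∈ X'ᶜ := by
    rintro x hxS hx ⟨a, haX, ha⟩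
    exact hx (by rwa [show a = ⟨x, hxS⟩ from Subtype.ext ha] at haX)
  let φ : (G.induce Xᶜ) →g (Gp.induce X'ᶜ) :=
    ⟨fun a => ⟨a.1.1, memX' a.1.1 a.1.2 a.2⟩, fun h => h⟩
  set u : (X'ᶜ : Set V) := ⟨v, hvX'⟩ with hu
  have hcu : (Gp.induce X'ᶜ).IsClique ((Gp.induce X'ᶜ).neighborSet u) := by
    intro a ha b hb hab
    exact hsimp ha hb (fun h => hab (Subtype.ext h))
  have hinj : Function.Injective (ConnectedComponent.map φ) := by
    intro c1 c2
    refine ConnectedComponent.ind₂ (fun a b h => ?_) c1 c2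
    simp only [ConnectedComponent.map_mk] at h
    obtain ⟨w⟩ := ConnectedComponent.eq.mp h
    have hau : φ a ≠ u := fun h => a.1.2 (congrArg Subtype.val h)
    have hbu : φ b ≠ u := fun h => b.1.2 (congrArg Subtype.val h)
    obtain ⟨w', hw'⟩ := simplicial_shortcut _ u hcu w.length _ _ w le_rfl hau hbu
    apply ConnectedComponent.sound
    clear h w
    have key : ∀ (p q : (X'ᶜ : Set V)) (w : (Gp.induce X'ᶜ).Walk p q), u ∉ w.support →
        ∀ (hp : p.1 ∈ S) (hq : q.1 ∈ S) (hp2 : (⟨p.1, hp⟩ : S) ∈ Xᶜ) (hq2 : (⟨q.1, hq⟩ : S) ∈ Xᶜ),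
        (G.induce Xᶜ).Reachable ⟨⟨p.1, hp⟩, hp2⟩ ⟨⟨q.1, hq⟩, hq2⟩ := by
      intro p q w
      induction w with
      | nil => intro _ hp hq hp2 hq2; rfl
      | cons h w ihw =>
        rename_i p c q
        intro hsup hp hq hp2 hq2
        simp only [Walk.support_cons, List.mem_cons] at hsup
        push_neg at hsup
        have hucne : u ≠ c := fun h => hsup.2 (h ▸ w.start_mem_support)
        have hcS : c.1 ∈ S := fun hcv => hucne (Subtype.ext hcv.symm)
        have hc2 : (⟨c.1, hcS⟩ : S) ∈ Xᶜ := by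
          intro hmem
          exact c.2 ⟨⟨c.1, hcS⟩, hmem, rfl⟩
        exact Reachable.trans ⟨Walk.cons (by exact h) .nil⟩ (ihw hsup.2 hcS hq hc2 hq2)
    have ha := key (φ a) (φ b) w' hw' a.1.2 b.1.2 ?_ ?_
    · convert ha using 2 <;> rfl
    · exact a.2
    · exact b.2
  have hle : Nat.card (G.induce Xᶜ).ConnectedComponent
      ≤ Nat.card (Gp.induce X'ᶜ).ConnectedComponent :=
    Nat.card_le_card_of_injective _ hinj
  have hX'cut : 1 < Nat.card (Gp.induce X'ᶜ).ConnectedComponent := lt_of_lt_of_le hX hle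
  calc Gp.toughness
      ≤ (X'.ncard : ENNReal) / (Nat.card (Gp.induce X'ᶜ).ConnectedComponent : ENNReal) :=
        iInf₂_le X' hX'cut
    _ ≤ (X.ncard : ENNReal) / (Nat.card (G.induce Xᶜ).ConnectedComponent : ENNReal) := by
        rw [hcard]
        exact ENNReal.div_le_div le_rfl (by exact_mod_cast hle)
end

section
/- Let k ≥ 1 and let G and G⁺ be k-trees such that G is obtained from G⁺ by removing a simplicial vertex. If t is a twig in G but not in G⁺, then some vertex of the bud of t (in G) is a twig in G⁺. -/
open SimpleGraph

section AuxKTree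
set_option linter.unusedSectionVars false

variable {W : Type*} [Fintype W] [DecidableEq W] {k : ℕ} {H : SimpleGraph W}

lemma ncard_level (e : W ≃ Fin (Fintype.card W)) (s : Finset (Fin (Fintype.card W))) :
    Set.ncard {w : W | e w ∈ s} = s.card := by
  have h : {w : W | e w ∈ s} = ↑(s.map e.symm.toEmbedding) := by
    ext w
    simp only [Set.mem_setOf_eq, Finset.coe_map, Set.mem_image, Finset.mem_coe,
      Equiv.coe_toEmbedding]
    constructor
    · intro h; exact ⟨e w, h, e.symm_apply_apply w⟩
    · rintro ⟨i, hi, rfl⟩; simpa using hi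
  rw [h, Set.ncard_coe_finset, Finset.card_map]

section
variable (e : W ≃ Fin (Fintype.card W))
  (he : ∀ v : W, H.IsClique {w : W | H.Adj v w ∧ e w < e v} ∧
      Set.ncard {w : W | H.Adj v w ∧ e w < e v} = min (e v : ℕ) k)

include he in
lemma back_eq {u : W} (hu : (e u : ℕ) ≤ k) :
    {w : W | H.Adj u w ∧ e w < e u} = {w : W | e w < e u} := by
  have hsub : {w : W | H.Adj u w ∧ e w < e u} ⊆ {w : W | e w < e u} := fun w hw => hw.2
  have hcard : Set.ncard {w : W | e w < e u} = (e u : ℕ) := by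
    have h2 : {w : W | e w < e u} = {w : W | e w ∈ Finset.Iio (e u)} := by simp
    rw [h2, ncard_level, Fin.card_Iio]
  apply Set.eq_of_subset_of_ncard_le hsub _ (Set.toFinite _)
  rw [hcard, (he u).2]
  omega

include he in
lemma adj_of_lt {a b : W} (hb : (e b : ℕ) ≤ k) (hab : e a < e b) : H.Adj b a := by
  have := back_eq e he hb
  have : a ∈ {w : W | H.Adj b w ∧ e w < e b} := this ▸ hab
  exact this.1

include he in
lemma P_clique : H.IsClique {w : W | (e w : ℕ) ≤ k} := by
  intro a ha b hb hne
  rcases lt_trichotomy (e a) (e b) with h | h | h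
  · exact (adj_of_lt e he hb h).symm
  · exact absurd (e.injective h) hne
  · exact adj_of_lt e he ha h

lemma P_ncard (hn : k + 1 ≤ Fintype.card W) :
    Set.ncard {w : W | (e w : ℕ) ≤ k} = k + 1 := by
  have h2 : {w : W | (e w : ℕ) ≤ k} = {w : W | e w ∈ Finset.Iic (⟨k, hn⟩ : Fin (Fintype.card W))} := by
    simp [Fin.le_def]
  rw [h2, ncard_level, Fin.card_Iic]

include he in
lemma min_degree (hn : k + 1 ≤ Fintype.card W) (u : W) :
    k ≤ (H.neighborSet u).ncard := by
  rcases le_or_gt (e u : ℕ) k with hu | hu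
  · have hsub : {w : W | (e w : ℕ) ≤ k} \ {u} ⊆ H.neighborSet u := by
      rintro w ⟨hw, hwu⟩
      exact P_clique e he hu hw (fun h => hwu (by simp [h.symm]))
    have h1 : ({w : W | (e w : ℕ) ≤ k} \ {u}).ncard = k := by
      rw [Set.ncard_diff_singleton_of_mem (show u ∈ {w : W | (e w : ℕ) ≤ k} from hu), P_ncard e hn]
      omega
    calc k = _ := h1.symm
    _ ≤ _ := Set.ncard_le_ncard hsub (Set.toFinite _)
  · have hsub : {w : W | H.Adj u w ∧ e w < e u} ⊆ H.neighborSet u := fun w hw => hw.1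
    have := Set.ncard_le_ncard hsub (Set.toFinite _)
    rw [(he u).2] at this
    omega

include he in
lemma clique_card_le {Q : Set W} (hQ : H.IsClique Q) : Q.ncard ≤ k + 1 := by
  rcases Q.eq_empty_or_nonempty with rfl | hne
  · simp
  · obtain ⟨q, hq, hmax⟩ := Set.Finite.exists_maximalFor (fun w => e w) Q (Set.toFinite _) hne
    have hsub : Q \ {q} ⊆ {w : W | H.Adj q w ∧ e w < e q} := by
      rintro w ⟨hw, hwq⟩
      refine ⟨hQ hq hw (fun h => hwq (by simp [h.symm])), ?_⟩
      rcases lt_or_ge (e w) (e q) with h | h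
      · exact h
      · exact absurd (e.injective (le_antisymm (hmax hw h) h)) (by simpa using hwq)
    have := Set.ncard_le_ncard hsub (Set.toFinite _)
    rw [(he q).2] at this
    have h2 : (Q \ {q}).ncard = Q.ncard - 1 := Set.ncard_diff_singleton_of_mem hq
    have h3 : 0 < Q.ncard := (Set.ncard_pos (Set.toFinite _)).mpr ⟨q, hq⟩
    omega
end

section
variable (e : W ≃ Fin (Fintype.card W))
  (he : ∀ v : W, H.IsClique {w : W | H.Adj v w ∧ e w < e v} ∧
      Set.ncard {w : W | H.Adj v w ∧ e w < e v} = min (e v : ℕ) k)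

include he in
lemma simplicial_of_deg (hn : k + 1 ≤ Fintype.card W) (u : W)
    (hd : (H.neighborSet u).ncard = k) :
    H.IsClique (H.neighborSet u) ∧
      ((e u : ℕ) ≤ k → H.neighborSet u = {w : W | (e w : ℕ) ≤ k} \ {u}) := by
  rcases le_or_gt (e u : ℕ) k with hu | hu
  · have hsub : {w : W | (e w : ℕ) ≤ k} \ {u} ⊆ H.neighborSet u := by
      rintro w ⟨hw, hwu⟩
      exact P_clique e he hu hw (fun h => hwu (by simp [h.symm]))
    have h1 : ({w : W | (e w : ℕ) ≤ k} \ {u}).ncard = k := by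
      rw [Set.ncard_diff_singleton_of_mem (show u ∈ {w : W | (e w : ℕ) ≤ k} from hu)
        , P_ncard e hn]
      omega
    have heq : {w : W | (e w : ℕ) ≤ k} \ {u} = H.neighborSet u := by
      apply Set.eq_of_subset_of_ncard_le hsub _ (Set.toFinite _)
      rw [h1, hd]
    constructor
    · rw [← heq]
      exact (P_clique e he).subset Set.diff_subset
    · intro _; exact heq.symm
  · have hsub : {w : W | H.Adj u w ∧ e w < e u} ⊆ H.neighborSet u := fun w hw => hw.1
    have heq : {w : W | H.Adj u w ∧ e w < e u} = H.neighborSet u := by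
      apply Set.eq_of_subset_of_ncard_le hsub _ (Set.toFinite _)
      rw [hd, (he u).2]
      omega
    refine ⟨?_, fun h => absurd h (by omega)⟩
    rw [← heq]
    exact (he u).1

include he in
lemma no_adjacent_deg_k (hk : 1 ≤ k) (hn : k + 2 ≤ Fintype.card W) {x y : W}
    (hxy : H.Adj x y) (hx : (H.neighborSet x).ncard = k)
    (hy : (H.neighborSet y).ncard = k) : False := by
  -- wlog e x < e y
  wlog hlt : e x < e y generalizing x y
  · exact this hxy.symm hy hx (by
      rcases lt_trichotomy (e x) (e y) with h | h | h
      · exact absurd h hlt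
      · exact absurd (e.injective h) hxy.ne
      · exact h)
  have hn' : k + 1 ≤ Fintype.card W := by omega
  -- e x ≤ k
  have hex : (e x : ℕ) ≤ k := by
    by_contra hgt
    push_neg at hgt
    have hins : insert y {w : W | H.Adj x w ∧ e w < e x} ⊆ H.neighborSet x := by
      rintro w (rfl | hw)
      · exact hxy
      · exact hw.1
    have hny : y ∉ {w : W | H.Adj x w ∧ e w < e x} := by
      intro hw
      exact absurd hlt (not_lt.mpr hw.2.le)
    have := Set.ncard_le_ncard hins (Set.toFinite _)
    rw [Set.ncard_insert_of_notMem hny (Set.toFinite _), (he x).2, hx] at this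
    omega
  have hNx : H.neighborSet x = {w : W | (e w : ℕ) ≤ k} \ {x} :=
    (simplicial_of_deg e he hn' x hx).2 hex
  have hyP : (e y : ℕ) ≤ k := by
    have : y ∈ H.neighborSet x := hxy
    rw [hNx] at this
    exact this.1
  have hNy : H.neighborSet y = {w : W | (e w : ℕ) ≤ k} \ {y} :=
    (simplicial_of_deg e he hn' y hy).2 hyP
  set z := e.symm ⟨k + 1, by omega⟩ with hz
  have hez : (e z : ℕ) = k + 1 := by simp [hz]
  have hsub : {w : W | H.Adj z w ∧ e w < e z} ⊆ ({w : W | (e w : ℕ) ≤ k} \ {x}) \ {y} := by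
    rintro w ⟨hadj, hw⟩
    refine ⟨⟨?_, ?_⟩, ?_⟩
    · have : (e w : ℕ) < k + 1 := by rw [← hez]; exact hw
      simpa using Nat.lt_succ_iff.mp this
    · rintro rfl
      have : z ∈ H.neighborSet w := hadj.symm
      rw [hNx] at this
      exact absurd (show (e z : ℕ) ≤ k from this.1) (by omega)
    · rintro rfl
      have : z ∈ H.neighborSet w := hadj.symm
      rw [hNy] at this
      exact absurd (show (e z : ℕ) ≤ k from this.1) (by omega)
  have hle := Set.ncard_le_ncard hsub (Set.toFinite _)
  rw [(he z).2, hez] at hle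
  have hxP : x ∈ {w : W | (e w : ℕ) ≤ k} := hex
  have hyP' : y ∈ {w : W | (e w : ℕ) ≤ k} \ {x} := ⟨hyP, fun h => hxy.ne (by simpa using h.symm)⟩
  have c1 : ({w : W | (e w : ℕ) ≤ k} \ {x}).ncard = k := by
    rw [Set.ncard_diff_singleton_of_mem hxP, P_ncard e hn']
    omega
  have c2 : (({w : W | (e w : ℕ) ≤ k} \ {x}) \ {y}).ncard = k - 1 := by
    rw [Set.ncard_diff_singleton_of_mem hyP', c1]
  rw [c2] at hle
  omega

include he in
lemma complete_of_card_le (hn : Fintype.card W ≤ k + 1) {a b : W} (hab : a ≠ b) :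
    H.Adj a b := by
  have h : ∀ w : W, (e w : ℕ) ≤ k := by
    intro w
    have := (e w).2
    omega
  rcases lt_trichotomy (e a) (e b) with hlt | heq | hlt
  · exact (adj_of_lt e he (h b) hlt).symm
  · exact absurd (e.injective heq) hab
  · exact adj_of_lt e he (h a) hlt
end


variable {V : Type*} [Fintype V] [DecidableEq V] {Gp : SimpleGraph V} {v : V}

lemma image_neighborSet (w : {x : V | x ≠ v}) :
    Subtype.val '' ((Gp.induce {x : V | x ≠ v}).neighborSet w) = Gp.neighborSet ↑w \ {v} := by
  ext u
  constructor
  · rintro ⟨a, ha, rfl⟩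
    have : Gp.Adj ↑w ↑a := ha
    exact ⟨this, a.2⟩
  · rintro ⟨hadj, hne⟩
    exact ⟨⟨u, hne⟩, by exact hadj, rfl⟩

lemma deg_transfer_adj (w : {x : V | x ≠ v}) (h : Gp.Adj ↑w v) :
    (Gp.neighborSet (w : V)).ncard = ((Gp.induce {x : V | x ≠ v}).neighborSet w).ncard + 1 := by
  have h1 := Set.ncard_image_of_injective ((Gp.induce {x : V | x ≠ v}).neighborSet w)
    (Subtype.val_injective (p := fun x => x ∈ {x : V | x ≠ v}))
  rw [image_neighborSet w] at h1
  rw [← h1]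
  rw [Set.ncard_diff_singleton_add_one (by exact h) (Set.toFinite _)]

lemma deg_transfer_nadj (w : {x : V | x ≠ v}) (h : ¬ Gp.Adj ↑w v) :
    (Gp.neighborSet (w : V)).ncard = ((Gp.induce {x : V | x ≠ v}).neighborSet w).ncard := by
  have h1 := Set.ncard_image_of_injective ((Gp.induce {x : V | x ≠ v}).neighborSet w)
    (Subtype.val_injective (p := fun x => x ∈ {x : V | x ≠ v}))
  rw [image_neighborSet w] at h1
  rw [← h1, Set.diff_singleton_eq_self (by exact h)]

lemma clique_transfer {S : Set {x : V | x ≠ v}}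
    (h : (Gp.induce {x : V | x ≠ v}).IsClique S) : Gp.IsClique (Subtype.val '' S) := by
  rintro a ⟨a', ha', rfl⟩ b ⟨b', hb', rfl⟩ hne
  exact h ha' hb' (fun hh => hne (by rw [hh]))

end AuxKTree

section Aux2
set_option linter.unusedSectionVars false
lemma ktree_adj_iff {V : Type*} {Gp : SimpleGraph V} {v : V} (a b : {x : V | x ≠ v}) :
    (Gp.induce {x : V | x ≠ v}).Adj a b ↔ Gp.Adj ↑a ↑b := comap_adj

end Aux2

theorem twig_bud_twig {V : Type*} [Fintype V] [DecidableEq V] (k : ℕ) (hk : 1 ≤ k)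
    (Gp : SimpleGraph V) (v : V) (hsimp : Gp.IsClique (Gp.neighborSet v))
    (hGp : Gp.IsKTree k) (hG : (Gp.induce {x : V | x ≠ v}).IsKTree k)
    (t : {x : V // x ≠ v})
    (ht : (Gp.induce {x : V | x ≠ v}).IsTwig k t) (ht' : ¬ Gp.IsTwig k (t : V)) :
    ∃ s ∈ (Gp.induce {x : V | x ≠ v}).bud k t, Gp.IsTwig k (s : V) := by
  classical
  obtain ⟨⟨w₀, hw₀t, hw₀adj⟩, hbud, hCclique, hCcard⟩ := ht
  obtain ⟨hk1, e, he⟩ := hGp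
  obtain ⟨hk2, e', he'⟩ := hG
  have hcardW : Fintype.card {x : V | x ≠ v} = Fintype.card V - 1 := by
    simp [Finset.filter_ne', Finset.card_erase_of_mem]
  have hVW : k + 2 ≤ Fintype.card {x : V | x ≠ v} := by
    by_contra hle
    push_neg at hle
    exact hw₀adj (complete_of_card_le e' he' (by omega) (Ne.symm hw₀t))
  have hn3 : k + 3 ≤ Fintype.card V := by omega
  -- degree of v is k
  have degv : (Gp.neighborSet v).ncard = k := by
    have hle : (Gp.neighborSet v).ncard ≤ k := by
      have hcl : Gp.IsClique (insert v (Gp.neighborSet v)) := by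
        apply hsimp.insert
        intro b hb _
        exact hb
      have := clique_card_le e he hcl
      rwa [Set.ncard_insert_of_notMem (show v ∉ Gp.neighborSet v by simp) (Set.toFinite _),
        Nat.add_le_add_iff_right] at this
    have hge := min_degree e he (by omega) v
    omega
  have minG : ∀ w : {x : V | x ≠ v},
      k ≤ ((Gp.induce {x : V | x ≠ v}).neighborSet w).ncard :=
    min_degree e' he' (by omega)
  -- there is a bud element adjacent (in Gp) to v
  have key : ∃ s ∈ (Gp.induce {x : V | x ≠ v}).bud k t, Gp.Adj ↑s v := by
    by_contra hns
    push_neg at hns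
    apply ht'
    have hCeq : Gp.neighborSet ↑t \ Gp.bud k ↑t =
        Subtype.val '' ((Gp.induce {x : V | x ≠ v}).neighborSet t \
          (Gp.induce {x : V | x ≠ v}).bud k t) := by
      ext u
      constructor
      · rintro ⟨hu, hub⟩
        have hne : u ≠ v := by
          rintro rfl
          exact hub ⟨hu, degv⟩
        refine ⟨⟨u, hne⟩, ⟨?_, ?_⟩, rfl⟩
        · exact (ktree_adj_iff t ⟨u, hne⟩).mpr hu
        · intro hmem
          apply hub
          refine ⟨hu, ?_⟩
          rw [deg_transfer_nadj ⟨u, hne⟩ (hns ⟨u, hne⟩ hmem)]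
          exact hmem.2
      · rintro ⟨u', ⟨hadj, hnb⟩, rfl⟩
        refine ⟨(ktree_adj_iff t u').mp hadj, ?_⟩
        rintro ⟨hadj', hdeg'⟩
        by_cases hub : Gp.Adj ↑u' v
        · rw [deg_transfer_adj u' hub] at hdeg'
          have := minG u'
          omega
        · rw [deg_transfer_nadj u' hub] at hdeg'
          exact hnb ⟨hadj, hdeg'⟩
    refine ⟨⟨↑w₀, fun h => hw₀t (Subtype.val_injective h), ?_⟩, ?_, ?_, ?_⟩
    · intro h
      exact hw₀adj ((ktree_adj_iff t w₀).mpr h)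
    · obtain ⟨s₀, hs₀⟩ := hbud
      refine ⟨↑s₀, (ktree_adj_iff t s₀).mp hs₀.1, ?_⟩
      rw [deg_transfer_nadj s₀ (hns s₀ hs₀)]
      exact hs₀.2
    · rw [hCeq]
      exact clique_transfer hCclique
    · rw [hCeq, Set.ncard_image_of_injective _ Subtype.val_injective]
      exact hCcard
  obtain ⟨s, hsbud, hsv⟩ := key
  have hdegs : ((Gp.induce {x : V | x ≠ v}).neighborSet s).ncard = k := hsbud.2
  have hdegsGp : (Gp.neighborSet ↑s).ncard = k + 1 := by
    rw [deg_transfer_adj s hsv, hdegs]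
  have budset : Gp.bud k ↑s = {v} := by
    ext u
    constructor
    · rintro ⟨hadj, hdeg⟩
      by_contra hne
      have hne' : u ≠ v := hne
      have hdegG : ((Gp.induce {x : V | x ≠ v}).neighborSet ⟨u, hne'⟩).ncard = k := by
        by_cases hub : Gp.Adj u v
        · rw [deg_transfer_adj ⟨u, hne'⟩ hub] at hdeg
          have := minG ⟨u, hne'⟩
          omega
        · rw [deg_transfer_nadj ⟨u, hne'⟩ hub] at hdeg
          exact hdeg
      exact no_adjacent_deg_k e' he' hk hVW
        ((ktree_adj_iff s ⟨u, hne'⟩).mpr hadj) hdegs hdegG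
    · rintro rfl
      exact ⟨hsv, degv⟩
  refine ⟨s, hsbud, ?_, ?_, ?_, ?_⟩
  · -- nonuniversal
    by_contra h
    push_neg at h
    have hsub : {(↑s : V)}ᶜ ⊆ Gp.neighborSet ↑s := by
      intro w hw
      exact h w (fun hh => hw (by simp [hh]))
    have hle := Set.ncard_le_ncard hsub (Set.toFinite _)
    have hc : ({(↑s : V)}ᶜ : Set V).ncard = Fintype.card V - 1 := by
      rw [Set.compl_eq_univ_diff ({(↑s : V)} : Set V),
        Set.ncard_diff_singleton_of_mem (Set.mem_univ _),
        Set.ncard_univ, Nat.card_eq_fintype_card]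
    rw [hc, hdegsGp] at hle
    omega
  · exact ⟨v, by rw [budset]; rfl⟩
  · rw [budset, ← image_neighborSet s]
    exact clique_transfer ((simplicial_of_deg e' he' (by omega) s hdegs).1)
  · rw [budset, ← image_neighborSet s, Set.ncard_image_of_injective _ Subtype.val_injective]
    exact hdegs
end

section
/- Let k ≥ 1 and let G be a k-tree on at least k+3 vertices with toughness greater than k/3. Then G has a twig. Moreover, if v is a twig of G with bud S, then G − S is a k-tree of toughness greater than k/3, and in addition, if k ≥ 2, then S is a squeeze by v. -/
open SimpleGraph

set_option linter.unusedSectionVars false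


section Counting
variable {V : Type*} {n : ℕ}

lemma ncard_pos_lt (e : V ≃ Fin n) (i : Fin n) : {w : V | e w < i}.ncard = i := by
  have h1 : {w : V | e w < i} = e.symm '' (Set.Iio i) := by
    ext w
    constructor
    · intro hw; exact ⟨e w, hw, e.symm_apply_apply w⟩
    · rintro ⟨j, hj, rfl⟩; simpa using hj
  rw [h1, Set.ncard_image_of_injective _ e.symm.injective, ← Finset.coe_Iio,
    Set.ncard_coe_finset, Fin.card_Iio]

lemma ncard_pos_le (e : V ≃ Fin n) (i : Fin n) : {w : V | e w ≤ i}.ncard = i + 1 := by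
  have h1 : {w : V | e w ≤ i} = e.symm '' (Set.Iic i) := by
    ext w
    constructor
    · intro hw; exact ⟨e w, hw, e.symm_apply_apply w⟩
    · rintro ⟨j, hj, rfl⟩; simpa using hj
  rw [h1, Set.ncard_image_of_injective _ e.symm.injective, ← Finset.coe_Iic,
    Set.ncard_coe_finset, Fin.card_Iic]

end Counting

section KTreeCore
variable {V : Type*} [Fintype V] {k : ℕ} {G : SimpleGraph V} {e : V ≃ Fin (Fintype.card V)}

/-- back-neighbourhood -/
abbrev bkt (G : SimpleGraph V) (e : V ≃ Fin (Fintype.card V)) (v : V) : Set V :=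
  {w : V | G.Adj v w ∧ e w < e v}

variable (hKT : ∀ v : V, G.IsClique (bkt G e v) ∧ (bkt G e v).ncard = min (e v : ℕ) k)

include hKT

/-- a vertex with position `≤ k` is adjacent to all earlier vertices -/
lemma adj_of_early {v : V} (hv : (e v : ℕ) ≤ k) : ∀ w, e w < e v → G.Adj v w := by
  intro w hw
  have hsub : bkt G e v ⊆ {w : V | e w < e v} := fun x hx => hx.2
  have h1 : ({w : V | e w < e v}).ncard = (e v : ℕ) := ncard_pos_lt e (e v)
  have h2 : (bkt G e v).ncard = (e v : ℕ) := by
    rw [(hKT v).2]; omega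
  have heq : bkt G e v = {w : V | e w < e v} :=
    Set.eq_of_subset_of_ncard_le hsub (by rw [h1, h2]) (Set.toFinite _)
  have : w ∈ bkt G e v := by rw [heq]; exact hw
  exact this.1

/-- any two distinct vertices with positions `≤ k` are adjacent -/
lemma adj_of_early_pair {u w : V} (hu : (e u : ℕ) ≤ k) (hw : (e w : ℕ) ≤ k)
    (hne : u ≠ w) : G.Adj u w := by
  rcases lt_trichotomy (e u) (e w) with h | h | h
  · exact (adj_of_early hKT hw u h).symm
  · exact absurd (e.injective h) hne
  · exact adj_of_early hKT hu w h

/-- Lemma A, case of a late vertex: a degree-k vertex at position ≥ k has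
neighbourhood equal to its back-neighbourhood. -/
lemma degk_late {v : V} (hd : (G.neighborSet v).ncard = k) (hv : k ≤ (e v : ℕ)) :
    G.neighborSet v = bkt G e v := by
  have hsub : bkt G e v ⊆ G.neighborSet v := fun x hx => hx.1
  have h2 : (bkt G e v).ncard = k := by rw [(hKT v).2]; omega
  exact (Set.eq_of_subset_of_ncard_le hsub (by rw [hd, h2]) (Set.toFinite _)).symm

/-- Lemma A, case of an early vertex: a degree-k vertex at position < k has
neighbourhood = all other vertices of position ≤ k. -/
lemma degk_early {v : V} (hn : k + 1 ≤ Fintype.card V)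
    (hd : (G.neighborSet v).ncard = k) (hv : (e v : ℕ) < k) :
    G.neighborSet v = {u : V | u ≠ v ∧ (e u : ℕ) ≤ k} := by
  have hkn : k < Fintype.card V := by omega
  have hsub : {u : V | u ≠ v ∧ (e u : ℕ) ≤ k} ⊆ G.neighborSet v := by
    intro u hu
    exact (adj_of_early_pair hKT hu.2 (le_of_lt hv) hu.1).symm
  have hTcard : ({u : V | u ≠ v ∧ (e u : ℕ) ≤ k}).ncard = k := by
    have h1 : {u : V | u ≠ v ∧ (e u : ℕ) ≤ k} = {u : V | e u ≤ (⟨k, hkn⟩ : Fin (Fintype.card V))} \ {v} := by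
      ext u
      simp only [Set.mem_setOf_eq, Set.mem_diff, Set.mem_singleton_iff]
      constructor
      · rintro ⟨h1, h2⟩; exact ⟨by simpa [Fin.le_def] using h2, h1⟩
      · rintro ⟨h1, h2⟩; exact ⟨h2, by simpa [Fin.le_def] using h1⟩
    rw [h1, Set.ncard_diff_singleton_of_mem (by simp [Fin.le_def]; omega),
      ncard_pos_le e ⟨k, hkn⟩]
    simp
  exact (Set.eq_of_subset_of_ncard_le hsub (by rw [hd, hTcard]) (Set.toFinite _)).symm

/-- Lemma A: a degree-k vertex is simplicial -/
lemma degk_clique {v : V} (hn : k + 1 ≤ Fintype.card V)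
    (hd : (G.neighborSet v).ncard = k) : G.IsClique (G.neighborSet v) := by
  rcases lt_or_ge (e v : ℕ) k with hv | hv
  · rw [degk_early hKT hn hd hv]
    intro x hx y hy hne
    exact adj_of_early_pair hKT hx.2 hy.2 hne
  · rw [degk_late hKT hd hv]
    exact (hKT v).1

/-- a degree-k vertex at position ≥ k has all neighbours earlier -/
lemma degk_late_nbr {v x : V} (hd : (G.neighborSet v).ncard = k) (hv : k ≤ (e v : ℕ))
    (hx : G.Adj v x) : e x < e v := by
  have := degk_late hKT hd hv
  have hx' : x ∈ G.neighborSet v := hx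
  rw [this] at hx'
  exact hx'.2

/-- Lemma B: no two adjacent degree-k vertices when `n ≥ k+2`. -/
lemma no_adjacent_degk (hk : 1 ≤ k) (hn : k + 2 ≤ Fintype.card V)
    {s t : V} (hadj : G.Adj s t)
    (hs : (G.neighborSet s).ncard = k) (ht : (G.neighborSet t).ncard = k) : False := by
  have hn1 : k + 1 ≤ Fintype.card V := by omega
  set K : Set V := insert s (G.neighborSet s) with hK
  have hsK : s ∈ K := Set.mem_insert _ _
  have htK : t ∈ K := Set.mem_insert_of_mem _ hadj
  have hKcard : K.ncard = k + 1 := by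
    rw [hK, Set.ncard_insert_of_notMem (G.notMem_neighborSet_self) (Set.toFinite _), hs]
  have hNtK : G.neighborSet t ⊆ K := by
    intro x hx
    by_cases hxs : x = s
    · rw [hxs]; exact hsK
    · have hsNt : s ∈ G.neighborSet t := hadj.symm
      have : G.Adj x s := degk_clique hKT hn1 ht hx hsNt hxs
      exact Set.mem_insert_of_mem _ this.symm
  have hK2 : insert t (G.neighborSet t) ⊆ K := Set.insert_subset htK hNtK
  obtain ⟨a, ha, haA⟩ : ∃ a, (e a : ℕ) ≤ k ∧ insert a (G.neighborSet a) ⊆ K := by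
    by_cases h2 : (e t : ℕ) ≤ k
    · exact ⟨t, h2, hK2⟩
    · refine ⟨s, ?_, le_refl K⟩
      by_contra h3
      push_neg at h2 h3
      have e1 : e s < e t := by
        have := degk_late_nbr hKT ht (le_of_lt h2) hadj.symm
        exact this
      have e2 : e t < e s := degk_late_nbr hKT hs (le_of_lt h3) hadj
      exact absurd e1 (not_lt.mpr (le_of_lt e2))
  have hQ : {u : V | (e u : ℕ) ≤ k} ⊆ K := by
    intro u hu
    rcases lt_trichotomy (e u) (e a) with h | h | h
    · exact haA (Set.mem_insert_of_mem _ (adj_of_early hKT ha u h))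
    · rw [e.injective h]; exact haA (Set.mem_insert _ _)
    · exact haA (Set.mem_insert_of_mem _ (adj_of_early hKT hu a h).symm)
  have hkn : k < Fintype.card V := by omega
  have hQcard : ({u : V | (e u : ℕ) ≤ k}).ncard = k + 1 := by
    have h1 : {u : V | (e u : ℕ) ≤ k} = {u : V | e u ≤ (⟨k, hkn⟩ : Fin (Fintype.card V))} := by
      ext u; simp [Fin.le_def]
    rw [h1, ncard_pos_le e ⟨k, hkn⟩]
  have hQK : {u : V | (e u : ℕ) ≤ k} = K :=
    Set.eq_of_subset_of_ncard_le hQ (by rw [hQcard, hKcard]) (Set.toFinite _)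
  set z := e.symm ⟨k + 1, by omega⟩ with hz
  have hez : (e z : ℕ) = k + 1 := by rw [hz]; simp
  have hBz : (bkt G e z).ncard = k := by rw [(hKT z).2, hez]; omega
  have hzK : z ∉ K := by
    intro h
    rw [← hQK] at h
    simp only [Set.mem_setOf_eq, hez] at h
    omega
  have hBzsub : bkt G e z ⊆ K \ {s, t} := by
    intro x hx
    have hxlt : (e x : ℕ) < k + 1 := by
      have := hx.2; rw [Fin.lt_def, hez] at this; exact this
    have hxK : x ∈ K := hQ (show (e x : ℕ) ≤ k by omega)
    refine ⟨hxK, ?_⟩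
    intro hmem
    have hzadj : G.Adj z x := hx.1
    rw [Set.mem_insert_iff, Set.mem_singleton_iff] at hmem
    rcases hmem with rfl | rfl
    · exact hzK (Set.mem_insert_of_mem _ hzadj.symm)
    · exact hzK (hNtK hzadj.symm)
  have hstK : {s, t} ⊆ K := Set.insert_subset hsK (Set.singleton_subset_iff.mpr htK)
  have hdiff : (K \ {s, t}).ncard = k - 1 := by
    rw [Set.ncard_diff hstK (Set.toFinite _), hKcard, Set.ncard_pair hadj.ne]
    omega
  have hfin := Set.ncard_le_ncard hBzsub (Set.toFinite _)
  rw [hBz, hdiff] at hfin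
  omega

/-- there is a vertex of degree different from k -/
lemma exists_deg_ne (hk : 1 ≤ k) (hn : k + 2 ≤ Fintype.card V) :
    ∃ b : V, (G.neighborSet b).ncard ≠ k := by
  set u := e.symm ⟨Fintype.card V - 1, by omega⟩ with hu
  have heu : (e u : ℕ) = Fintype.card V - 1 := by rw [hu]; simp
  have hBu : (bkt G e u).ncard = k := by rw [(hKT u).2, heu]; omega
  have hne : (bkt G e u).Nonempty := by
    rw [← Set.ncard_pos (Set.toFinite _)] at *
    omega
  obtain ⟨b, hb⟩ := hne
  refine ⟨b, ?_⟩
  intro hdb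
  rcases lt_or_ge (e b : ℕ) k with hbe | hbe
  · have := degk_early hKT (by omega) hdb hbe
    have hub : u ∈ G.neighborSet b := hb.1.symm
    rw [this] at hub
    have : (e u : ℕ) ≤ k := hub.2
    omega
  · have := degk_late_nbr hKT hdb hbe hb.1.symm
    rw [Fin.lt_def, heu] at this
    have hblt : e b < e u := hb.2
    rw [Fin.lt_def, heu] at hblt
    omega

end KTreeCore


section Components
variable {V : Type*} [Fintype V] {G : SimpleGraph V}

lemma isolated_reachable_eq {X : Set V} {a b : V} (ha : G.neighborSet a ⊆ X)
    (ha' : a ∈ Xᶜ) (hb' : b ∈ Xᶜ)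
    (h : (G.induce Xᶜ).Reachable ⟨a, ha'⟩ ⟨b, hb'⟩) : a = b := by
  obtain ⟨p⟩ := h
  cases p with
  | nil => rfl
  | @cons _ w _ hadj q =>
      exfalso
      have hGa : G.Adj a w.1 := by simpa using hadj
      exact w.2 (ha hGa)

lemma isolated_comp_ne {X : Set V} {a b : V} (ha : G.neighborSet a ⊆ X)
    (ha' : a ∈ Xᶜ) (hb' : b ∈ Xᶜ) (hne : a ≠ b) :
    (G.induce Xᶜ).connectedComponentMk ⟨a, ha'⟩ ≠
      (G.induce Xᶜ).connectedComponentMk ⟨b, hb'⟩ := by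
  intro h
  rw [ConnectedComponent.eq] at h
  exact hne (isolated_reachable_eq ha ha' hb' h)

lemma three_components {X : Set V} {a b c : V}
    (haX : a ∉ X) (hbX : b ∉ X) (hcX : c ∉ X)
    (hab : a ≠ b) (hac : a ≠ c) (hbc : b ≠ c)
    (ha : G.neighborSet a ⊆ X) (hb : G.neighborSet b ⊆ X) :
    3 ≤ Nat.card (G.induce Xᶜ).ConnectedComponent := by
  classical
  have haX' : a ∈ Xᶜ := haX
  have hbX' : b ∈ Xᶜ := hbX
  have hcX' : c ∈ Xᶜ := hcX
  set f : Fin 3 → (G.induce Xᶜ).ConnectedComponent :=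
    ![(G.induce Xᶜ).connectedComponentMk ⟨a, haX'⟩,
      (G.induce Xᶜ).connectedComponentMk ⟨b, hbX'⟩,
      (G.induce Xᶜ).connectedComponentMk ⟨c, hcX'⟩] with hf
  have hinj : Function.Injective f := by
    intro i j hij
    fin_cases i <;> fin_cases j <;> simp_all [hf]
    · exact hab (isolated_reachable_eq ha haX' hbX' hij)
    · exact hac (isolated_reachable_eq ha haX' hcX' hij)
    · exact hab (isolated_reachable_eq ha haX' hbX' hij.symm)
    · exact hbc (isolated_reachable_eq hb hbX' hcX' hij)
    · exact hac (isolated_reachable_eq ha haX' hcX' hij.symm)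
    · exact hbc (isolated_reachable_eq hb hbX' hcX' hij.symm)
  calc 3 = Nat.card (Fin 3) := by simp
  _ ≤ _ := Nat.card_le_card_of_injective f hinj

lemma four_components {X : Set V} {a b c d : V}
    (haX : a ∉ X) (hbX : b ∉ X) (hcX : c ∉ X) (hdX : d ∉ X)
    (hab : a ≠ b) (hac : a ≠ c) (had : a ≠ d) (hbc : b ≠ c) (hbd : b ≠ d) (hcd : c ≠ d)
    (ha : G.neighborSet a ⊆ X) (hb : G.neighborSet b ⊆ X) (hc : G.neighborSet c ⊆ X) :
    4 ≤ Nat.card (G.induce Xᶜ).ConnectedComponent := by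
  classical
  have haX' : a ∈ Xᶜ := haX
  have hbX' : b ∈ Xᶜ := hbX
  have hcX' : c ∈ Xᶜ := hcX
  have hdX' : d ∈ Xᶜ := hdX
  set f : Fin 4 → (G.induce Xᶜ).ConnectedComponent :=
    ![(G.induce Xᶜ).connectedComponentMk ⟨a, haX'⟩,
      (G.induce Xᶜ).connectedComponentMk ⟨b, hbX'⟩,
      (G.induce Xᶜ).connectedComponentMk ⟨c, hcX'⟩,
      (G.induce Xᶜ).connectedComponentMk ⟨d, hdX'⟩] with hf
  have hinj : Function.Injective f := by
    intro i j hij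
    fin_cases i <;> fin_cases j <;> simp_all [hf]
    · exact hab (isolated_reachable_eq ha haX' hbX' hij)
    · exact hac (isolated_reachable_eq ha haX' hcX' hij)
    · exact had (isolated_reachable_eq ha haX' hdX' hij)
    · exact hab (isolated_reachable_eq ha haX' hbX' hij.symm)
    · exact hbc (isolated_reachable_eq hb hbX' hcX' hij)
    · exact hbd (isolated_reachable_eq hb hbX' hdX' hij)
    · exact hac (isolated_reachable_eq ha haX' hcX' hij.symm)
    · exact hbc (isolated_reachable_eq hb hbX' hcX' hij.symm)
    · exact hcd (isolated_reachable_eq hc hcX' hdX' hij)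
    · exact had (isolated_reachable_eq ha haX' hdX' hij.symm)
    · exact hbd (isolated_reachable_eq hb hbX' hdX' hij.symm)
    · exact hcd (isolated_reachable_eq hc hcX' hdX' hij.symm)
  calc 4 = Nat.card (Fin 4) := by simp
  _ ≤ _ := Nat.card_le_card_of_injective f hinj

end Components


section Tough
variable {V : Type*} [Fintype V] {G : SimpleGraph V} {k : ℕ}

lemma tough_contra3 (ht : G.ToughnessGT ((k : ℝ) / 3)) {X : Set V}
    (h3 : 3 ≤ Nat.card (G.induce Xᶜ).ConnectedComponent) (hX : X.ncard ≤ k) : False := by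
  have h1 : 1 < Nat.card (G.induce Xᶜ).ConnectedComponent := by omega
  have h2 := ht X h1
  have h4 : ((k : ℝ) / 3) * 3 ≤ ((k : ℝ) / 3) * (Nat.card (G.induce Xᶜ).ConnectedComponent) := by
    apply mul_le_mul_of_nonneg_left _ (by positivity)
    exact_mod_cast h3
  have h5 : (X.ncard : ℝ) ≤ (k : ℝ) := by exact_mod_cast hX
  nlinarith

lemma tough_contra4 (hk3 : 3 ≤ k) (ht : G.ToughnessGT ((k : ℝ) / 3)) {X : Set V}
    (h3 : 4 ≤ Nat.card (G.induce Xᶜ).ConnectedComponent) (hX : X.ncard ≤ k + 1) : False := by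
  have h1 : 1 < Nat.card (G.induce Xᶜ).ConnectedComponent := by omega
  have h2 := ht X h1
  have h4 : ((k : ℝ) / 3) * 4 ≤ ((k : ℝ) / 3) * (Nat.card (G.induce Xᶜ).ConnectedComponent) := by
    apply mul_le_mul_of_nonneg_left _ (by positivity)
    exact_mod_cast h3
  have h5 : (X.ncard : ℝ) ≤ (k : ℝ) + 1 := by exact_mod_cast hX
  have h6 : (3 : ℝ) ≤ (k : ℝ) := by exact_mod_cast hk3
  nlinarith

end Tough


section TwigFacts
variable {V : Type*} [Fintype V] {k : ℕ} {G : SimpleGraph V} {e : V ≃ Fin (Fintype.card V)}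

variable (hKT : ∀ v : V, G.IsClique (bkt G e v) ∧ (bkt G e v).ncard = min (e v : ℕ) k)
variable (hk : 1 ≤ k) (hcard : k + 3 ≤ Fintype.card V)
variable {v : V} (htwig : G.IsTwig k v)

include hKT hk hcard

lemma bud_indep {s t : V} (hs : s ∈ G.bud k v) (ht : t ∈ G.bud k v) : ¬ G.Adj s t :=
  fun h => no_adjacent_degk hKT hk (by omega) h hs.2 ht.2

include htwig

/-- every bud vertex omits exactly one base vertex -/
lemma bud_omit {s : V} (hs : s ∈ G.bud k v) :
    ∃ c ∈ G.neighborSet v \ G.bud k v,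
      G.neighborSet s = insert v ((G.neighborSet v \ G.bud k v) \ {c}) ∧ c ∉ G.neighborSet s := by
  set C := G.neighborSet v \ G.bud k v with hC
  have hvs : v ∈ G.neighborSet s := hs.1.symm
  have hclq : G.IsClique (G.neighborSet s) := degk_clique hKT (by omega) hs.2
  have hsub : G.neighborSet s \ {v} ⊆ C := by
    rintro x ⟨hx, hxv⟩
    have hxv' : x ≠ v := hxv
    have hadjxv : G.Adj x v := hclq hx hvs hxv'
    refine ⟨hadjxv.symm, ?_⟩
    intro hxB
    exact bud_indep hKT hk hcard hs hxB hx
  have hA : (G.neighborSet s \ {v}).ncard = k - 1 := by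
    rw [Set.ncard_diff_singleton_of_mem hvs, hs.2]
  have hCcard : C.ncard = k := htwig.2.2.2
  have h1 : (C \ (G.neighborSet s \ {v})).ncard = 1 := by
    rw [Set.ncard_diff hsub (Set.toFinite _), hA, hCcard]
    omega
  obtain ⟨c, hc⟩ := Set.ncard_eq_one.mp h1
  have hcc : c ∈ C \ (G.neighborSet s \ {v}) := by rw [hc]; rfl
  have hcv : c ≠ v := by
    intro h
    exact G.notMem_neighborSet_self (h ▸ hcc.1.1)
  have hcns : c ∉ G.neighborSet s := by
    intro h
    exact hcc.2 ⟨h, hcv⟩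
  have hAeq : G.neighborSet s \ {v} = C \ {c} := by
    apply Set.eq_of_subset_of_ncard_le
    · rintro x ⟨hx, hxv⟩
      refine ⟨hsub ⟨hx, hxv⟩, ?_⟩
      intro hxc
      rw [Set.mem_singleton_iff] at hxc
      exact hcns (hxc ▸ hx)
    · rw [Set.ncard_diff_singleton_of_mem hcc.1, hA, hCcard]
    · exact Set.toFinite _
  refine ⟨c, hcc.1, ?_, hcns⟩
  rw [← hAeq, Set.insert_diff_singleton, Set.insert_eq_of_mem hvs]

/-- two bud vertices cannot omit the same base vertex -/
lemma bud_omit_inj (htough : G.ToughnessGT ((k : ℝ) / 3))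
    {s t c : V} (hs : s ∈ G.bud k v) (ht : t ∈ G.bud k v) (hst : s ≠ t)
    (hcs : G.neighborSet s = insert v ((G.neighborSet v \ G.bud k v) \ {c}))
    (hct : G.neighborSet t = insert v ((G.neighborSet v \ G.bud k v) \ {c}))
    (hcC : c ∈ G.neighborSet v \ G.bud k v) : False := by
  set C := G.neighborSet v \ G.bud k v with hC
  set X := insert v (C \ {c}) with hX
  have hvC : v ∉ C := fun h => G.notMem_neighborSet_self h.1
  have hXcard : X.ncard = k := by
    rw [hX, Set.ncard_insert_of_notMem (fun h => hvC h.1) (Set.toFinite _),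
      Set.ncard_diff_singleton_of_mem hcC, htwig.2.2.2]
    omega
  have hsX : s ∉ X := by
    rintro (h | h)
    · exact G.ne_of_adj hs.1 h.symm
    · exact h.1.2 hs
  have htX : t ∉ X := by
    rintro (h | h)
    · exact G.ne_of_adj ht.1 h.symm
    · exact h.1.2 ht
  have hcX : c ∉ X := by
    rintro (h | h)
    · exact (fun hh => G.notMem_neighborSet_self (hh ▸ hcC).1) h
    · exact h.2 rfl
  have hsc : s ≠ c := fun h => hcC.2 (h ▸ hs)
  have htc : t ≠ c := fun h => hcC.2 (h ▸ ht)
  have h3 := three_components hsX htX hcX hst hsc htc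
    (by rw [hcs]) (by rw [hct])
  exact tough_contra3 htough h3 (le_of_eq hXcard)

/-- the bud has at most two elements -/
lemma bud_ncard_le_two (htough : G.ToughnessGT ((k : ℝ) / 3)) : (G.bud k v).ncard ≤ 2 := by
  by_contra hcon
  push_neg at hcon
  obtain ⟨s₁, h1, s₂, h2, s₃, h3', h12, h13, h23⟩ :=
    (Set.two_lt_ncard (Set.toFinite _)).mp hcon
  obtain ⟨c₁, hc₁C, hc₁, _⟩ := bud_omit hKT hk hcard htwig h1
  obtain ⟨c₂, hc₂C, hc₂, _⟩ := bud_omit hKT hk hcard htwig h2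
  obtain ⟨c₃, hc₃C, hc₃, _⟩ := bud_omit hKT hk hcard htwig h3'
  set C := G.neighborSet v \ G.bud k v with hC
  have hCcard : C.ncard = k := htwig.2.2.2
  have hcc12 : c₁ ≠ c₂ := fun h =>
    bud_omit_inj hKT hk hcard htwig htough h1 h2 h12 hc₁ (h ▸ hc₂) hc₁C
  have hcc13 : c₁ ≠ c₃ := fun h =>
    bud_omit_inj hKT hk hcard htwig htough h1 h3' h13 hc₁ (h ▸ hc₃) hc₁C
  have hcc23 : c₂ ≠ c₃ := fun h =>
    bud_omit_inj hKT hk hcard htwig htough h2 h3' h23 hc₂ (h ▸ hc₃) hc₂C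
  rcases lt_or_ge k 3 with hk3 | hk3
  · -- k ≤ 2 : three distinct elements of C, impossible
    have hsub3 : ({c₁, c₂, c₃} : Set V) ⊆ C := by
      intro x hx
      rcases hx with rfl | rfl | rfl
      exacts [hc₁C, hc₂C, hc₃C]
    have : ({c₁, c₂, c₃} : Set V).ncard = 3 := by
      rw [Set.ncard_insert_of_notMem (by simp [hcc12, hcc13]) (Set.toFinite _),
        Set.ncard_pair hcc23]
    have hle := Set.ncard_le_ncard hsub3 (Set.toFinite _)
    omega
  · -- k ≥ 3 : four components
    obtain ⟨w₀, hw₀v, hw₀adj⟩ := htwig.1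
    set X := insert v C with hX
    have hvC : v ∉ C := fun h => G.notMem_neighborSet_self h.1
    have hXcard : X.ncard = k + 1 := by
      rw [hX, Set.ncard_insert_of_notMem hvC (Set.toFinite _), hCcard]
    have hmem : ∀ s : V, s ∈ G.bud k v → s ∉ X := by
      intro s hs
      rintro (h | h)
      · exact G.ne_of_adj hs.1 h.symm
      · exact h.2 hs
    have hw₀X : w₀ ∉ X := by
      rintro (h | h)
      · exact hw₀v h
      · exact hw₀adj h.1
    have hw₀ne : ∀ s : V, s ∈ G.bud k v → s ≠ w₀ := by
      intro s hs h
      exact hw₀adj (h ▸ hs.1)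
    have hNsub : ∀ (s c' : V), G.neighborSet s = insert v (C \ {c'}) →
        G.neighborSet s ⊆ X := by
      intro s c' hcs
      rw [hcs, hX]
      exact Set.insert_subset_insert Set.diff_subset
    have h4 := four_components (hmem s₁ h1) (hmem s₂ h2) (hmem s₃ h3') hw₀X
      h12 h13 (hw₀ne s₁ h1) h23 (hw₀ne s₂ h2) (hw₀ne s₃ h3')
      (hNsub s₁ c₁ hc₁) (hNsub s₂ c₂ hc₂) (hNsub s₃ c₃ hc₃)
    exact tough_contra4 hk3 htough h4 (le_of_eq hXcard)

/-- the squeeze property -/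
lemma twig_squeeze (htough : G.ToughnessGT ((k : ℝ) / 3)) (hk2 : 2 ≤ k) :
    G.IsSqueeze v (G.bud k v) := by
  set C := G.neighborSet v \ G.bud k v with hC
  have hCcard : C.ncard = k := htwig.2.2.2
  have hvC : v ∉ C := fun h => G.notMem_neighborSet_self h.1
  refine ⟨fun s hs => hs.1, ?_, bud_ncard_le_two hKT hk hcard htwig htough, ?_, ?_, ?_⟩
  · have h0 : 0 < (G.bud k v).ncard := (Set.ncard_pos (Set.toFinite _)).mpr htwig.2.1
    omega
  · rw [← hC, hCcard]; omega
  · intro s hs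
    obtain ⟨c, hcC, hcs, _⟩ := bud_omit hKT hk hcard htwig hs
    have : C ∩ G.neighborSet s = C \ {c} := by
      rw [hcs]
      ext x
      constructor
      · rintro ⟨hx1, hx2⟩
        rcases hx2 with h | h
        · exact absurd h.symm (fun hh => hvC (hh ▸ hx1))
        · exact h
      · rintro ⟨hx1, hx2⟩
        exact ⟨hx1, Set.mem_insert_of_mem _ ⟨hx1, hx2⟩⟩
    rw [← hC, this, Set.ncard_diff_singleton_of_mem hcC, hCcard]
  · intro r hr
    rcases le_or_gt (G.bud k v).ncard 1 with h1 | h1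
    · omega
    · have h2 : (G.bud k v).ncard = 2 :=
        le_antisymm (bud_ncard_le_two hKT hk hcard htwig htough) h1
      obtain ⟨s₁, s₂, hs12, hSeq⟩ := Set.ncard_eq_two.mp h2
      have h1m : s₁ ∈ G.bud k v := by rw [hSeq]; exact Set.mem_insert _ _
      have h2m : s₂ ∈ G.bud k v := by rw [hSeq]; exact Set.mem_insert_of_mem _ rfl
      obtain ⟨c₁, hc₁C, hc₁, _⟩ := bud_omit hKT hk hcard htwig h1m
      obtain ⟨c₂, hc₂C, hc₂, _⟩ := bud_omit hKT hk hcard htwig h2m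
      have hne : (G.bud k v ∩ G.neighborSet r).Nonempty := by
        by_contra hcon
        rw [Set.not_nonempty_iff_eq_empty] at hcon
        have hkey : ∀ (s c' : V), s ∈ G.bud k v →
            G.neighborSet s = insert v (C \ {c'}) → r = c' := by
          intro s c' hsm hcs
          have hrs : r ∉ G.neighborSet s := by
            intro h
            have : s ∈ G.bud k v ∩ G.neighborSet r := ⟨hsm, h.symm⟩
            rw [hcon] at this
            exact this
          rw [hcs] at hrs
          by_contra hrc
          exact hrs (Set.mem_insert_of_mem _ ⟨hr, hrc⟩)
        have e1 := hkey s₁ c₁ h1m hc₁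
        have e2 := hkey s₂ c₂ h2m hc₂
        exact bud_omit_inj hKT hk hcard htwig htough h1m h2m hs12 hc₁
          (by rw [e1] at e2; rw [← e2] at hc₂; exact hc₂) (e1 ▸ hc₁C)
      have hpos : 0 < (G.bud k v ∩ G.neighborSet r).ncard :=
        (Set.ncard_pos (Set.toFinite _)).mpr hne
      omega

end TwigFacts
section ToughDel
variable {V : Type*} [Fintype V] {k : ℕ} {G : SimpleGraph V} {S Y : Set V}

lemma mem_union_compl {x : V} (h1 : x ∉ Y) (h2 : x ∉ S) : x ∈ (Y ∪ S)ᶜ := by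
  intro h
  exact h.elim h1 h2

lemma reach_avoid (hclq : ∀ s ∈ S, G.IsClique (G.neighborSet s))
    (hind : ∀ s ∈ S, ∀ t ∈ S, ¬ G.Adj s t) :
    ∀ (n : ℕ) (u w : ↥(Yᶜ)) (p : (G.induce Yᶜ).Walk u w), p.length ≤ n →
      ∀ (hu : u.1 ∉ S) (hw : w.1 ∉ S),
      (G.induce (Y ∪ S)ᶜ).Reachable ⟨u.1, mem_union_compl u.2 hu⟩
        ⟨w.1, mem_union_compl w.2 hw⟩ := by
  intro n
  induction n with
  | zero =>
      intro u w p hp hu hw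
      cases p with
      | nil => exact Reachable.refl _
      | cons h q => simp at hp
  | succ n ih =>
      intro u w p hp hu hw
      cases p with
      | nil => exact Reachable.refl _
      | @cons _ m _ h q =>
        by_cases hmS : m.1 ∈ S
        · cases q with
          | nil => exact absurd hmS hw
          | @cons _ m2 _ h2 r =>
            have hGum : G.Adj u.1 m.1 := h
            have hGmm2 : G.Adj m.1 m2.1 := h2
            have hm2S : m2.1 ∉ S := fun hh => hind _ hmS _ hh hGmm2
            have hlen : r.length ≤ n := by
              simp only [SimpleGraph.Walk.length_cons] at hp
              omega
            have hrest := ih m2 w r hlen hm2S hw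
            by_cases heq : u.1 = m2.1
            · have : (⟨u.1, mem_union_compl u.2 hu⟩ : ↥((Y ∪ S)ᶜ)) =
                  ⟨m2.1, mem_union_compl m2.2 hm2S⟩ := Subtype.ext heq
              rw [this]
              exact hrest
            · have hadj : G.Adj u.1 m2.1 :=
                hclq m.1 hmS hGum.symm hGmm2 heq
              have hedge : (G.induce (Y ∪ S)ᶜ).Adj ⟨u.1, mem_union_compl u.2 hu⟩
                  ⟨m2.1, mem_union_compl m2.2 hm2S⟩ := hadj
              exact (hedge.reachable).trans hrest
        · have hlen : q.length ≤ n := by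
            simp only [SimpleGraph.Walk.length_cons] at hp
            omega
          have hrest := ih m w q hlen hmS hw
          have hedge : (G.induce (Y ∪ S)ᶜ).Adj ⟨u.1, mem_union_compl u.2 hu⟩
              ⟨m.1, mem_union_compl m.2 hmS⟩ := h
          exact (hedge.reachable).trans hrest

open scoped Classical in
/-- removing an "independent simplicial" set of vertices preserves toughness -/
lemma tough_del (hclq : ∀ s ∈ S, G.IsClique (G.neighborSet s))
    (hind : ∀ s ∈ S, ∀ t ∈ S, ¬ G.Adj s t)
    (htough : G.ToughnessGT ((k : ℝ) / 3)) :
    (G.induce Sᶜ).ToughnessGT ((k : ℝ) / 3) := by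
  intro X hX
  classical
  set Y : Set V := Subtype.val '' X with hY
  -- the inclusion hom from (G.induce Sᶜ).induce Xᶜ to G.induce Yᶜ
  have hmem1 : ∀ a : ↥(Xᶜ : Set ↥(Sᶜ)), (a.1.1 : V) ∈ Yᶜ := by
    rintro ⟨⟨x, hxS⟩, hxX⟩
    rintro ⟨y, hyX, hyval⟩
    have : y = ⟨x, hxS⟩ := Subtype.ext hyval
    exact hxX (this ▸ hyX)
  set φ : ((G.induce Sᶜ).induce Xᶜ) →g (G.induce Yᶜ) :=
    ⟨fun a => ⟨a.1.1, hmem1 a⟩, by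
      rintro ⟨⟨x, hxS⟩, hxX⟩ ⟨⟨y, hyS⟩, hyX⟩ hadj
      exact hadj⟩ with hφ
  -- the component map is injective
  have hinj : Function.Injective (SimpleGraph.ConnectedComponent.map φ) := by
    intro c d
    refine SimpleGraph.ConnectedComponent.ind₂ (fun a b => ?_) c d
    intro hmap
    rw [SimpleGraph.ConnectedComponent.map_mk, SimpleGraph.ConnectedComponent.map_mk,
      SimpleGraph.ConnectedComponent.eq] at hmap
    rw [SimpleGraph.ConnectedComponent.eq]
    -- hmap : (G.induce Yᶜ).Reachable (φ a) (φ b)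
    obtain ⟨p⟩ := hmap
    have haS : (φ a).1 ∉ S := a.1.2
    have hbS : (φ b).1 ∉ S := b.1.2
    have hreach := reach_avoid hclq hind p.length (φ a) (φ b) p (le_refl _) haS hbS
    -- transfer back along the iso (Y ∪ S)ᶜ ≃ nested subtype
    have hmem2 : ∀ x : ↥((Y ∪ S)ᶜ), ∃ (h1 : x.1 ∈ Sᶜ), (⟨x.1, h1⟩ : ↥(Sᶜ)) ∈ Xᶜ := by
      rintro ⟨x, hx⟩
      have hxS : x ∈ Sᶜ := fun h => hx (Set.mem_union_right _ h)
      refine ⟨hxS, ?_⟩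
      intro hmem
      exact hx (Set.mem_union_left _ ⟨⟨x, hxS⟩, hmem, rfl⟩)
    set ψ : (G.induce (Y ∪ S)ᶜ) →g ((G.induce Sᶜ).induce Xᶜ) :=
      ⟨fun x => ⟨⟨x.1, (hmem2 x).1⟩, (hmem2 x).2⟩, by
        rintro ⟨x, hx⟩ ⟨y, hy⟩ hadj
        exact hadj⟩ with hψ
    have := hreach.map ψ
    have hea : ψ ⟨(φ a).1, mem_union_compl (φ a).2 haS⟩ = a := by
      apply Subtype.ext; apply Subtype.ext; rfl
    have heb : ψ ⟨(φ b).1, mem_union_compl (φ b).2 hbS⟩ = b := by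
      apply Subtype.ext; apply Subtype.ext; rfl
    rwa [hea, heb] at this
  have hcardle : Nat.card ((G.induce Sᶜ).induce Xᶜ).ConnectedComponent ≤
      Nat.card (G.induce Yᶜ).ConnectedComponent :=
    Nat.card_le_card_of_injective _ hinj
  have hXY : Y.ncard = X.ncard := Set.ncard_image_of_injective _ Subtype.val_injective
  have h1 : 1 < Nat.card (G.induce Yᶜ).ConnectedComponent := lt_of_lt_of_le hX hcardle
  have h2 := htough Y h1
  rw [hXY] at h2
  calc ((k : ℝ) / 3) * Nat.card ((G.induce Sᶜ).induce Xᶜ).ConnectedComponent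
      ≤ ((k : ℝ) / 3) * Nat.card (G.induce Yᶜ).ConnectedComponent := by
        apply mul_le_mul_of_nonneg_left _ (by positivity)
        exact_mod_cast hcardle
    _ < X.ncard := h2

end ToughDel
section KTreeDel
variable {V : Type*} [Fintype V] {k : ℕ} {G : SimpleGraph V} {e : V ≃ Fin (Fintype.card V)}

/-- swap an early degree-k vertex to position k -/
lemma ktree_swap
    (hKT : ∀ v : V, G.IsClique (bkt G e v) ∧ (bkt G e v).ncard = min (e v : ℕ) k)
    (hn : k + 2 ≤ Fintype.card V) {s : V}
    (hs : (G.neighborSet s).ncard = k) (hes : (e s : ℕ) < k) :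
    ∃ e2 : V ≃ Fin (Fintype.card V),
      (∀ v : V, G.IsClique (bkt G e2 v) ∧ (bkt G e2 v).ncard = min (e2 v : ℕ) k) ∧
      (∀ x, G.Adj s x → e2 x < e2 s) := by
  classical
  have hkn : k < Fintype.card V := by omega
  set t : V := e.symm ⟨k, hkn⟩ with ht
  have het : (e t : ℕ) = k := by rw [ht]; simp
  have hst : s ≠ t := by
    intro h
    rw [h, het] at hes
    omega
  have hNs : G.neighborSet s = {u : V | u ≠ s ∧ (e u : ℕ) ≤ k} :=
    degk_early hKT (by omega) hs hes
  have hts : G.Adj s t := by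
    have : t ∈ G.neighborSet s := by rw [hNs]; exact ⟨hst.symm, le_of_eq het⟩
    exact this
  set e2 : V ≃ Fin (Fintype.card V) := (Equiv.swap s t).trans e with he2
  have he2s : (e2 s : ℕ) = k := by
    rw [he2]; simp [Equiv.swap_apply_left, het]
  have he2t : (e2 t : ℕ) = (e s : ℕ) := by
    rw [he2]; simp [Equiv.swap_apply_right]
  have he2o : ∀ x, x ≠ s → x ≠ t → e2 x = e x := by
    intro x h1 h2
    rw [he2]; simp [Equiv.swap_apply_of_ne_of_ne h1 h2]
  have hadj_s : ∀ w, w ≠ s → (e w : ℕ) ≤ k → G.Adj s w := by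
    intro w h1 h2
    have : w ∈ G.neighborSet s := by rw [hNs]; exact ⟨h1, h2⟩
    exact this
  refine ⟨e2, ?_, ?_⟩
  · intro v
    by_cases hvs : v = s
    · subst hvs
      have hset : bkt G e2 v = G.neighborSet v := by
        ext w
        constructor
        · intro hw; exact hw.1
        · intro hw
          rw [hNs] at hw
          refine ⟨hadj_s w hw.1 hw.2, ?_⟩
          rw [Fin.lt_def, he2s]
          by_cases hwt : w = t
          · subst hwt; rw [he2t]; omega
          · have := he2o w hw.1 hwt
            rw [this]
            rcases lt_or_eq_of_le hw.2 with h | h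
            · exact h
            · exfalso
              apply hwt
              apply e.injective
              rw [ht]
              apply Fin.ext
              simp [h]
      refine ⟨?_, ?_⟩
      · rw [hset]
        exact degk_clique hKT (by omega) hs
      · rw [hset, hs, he2s]
        omega
    · by_cases hvt : v = t
      · subst hvt
        have he2tF : e2 t = e s := by
          rw [he2]; simp [Equiv.swap_apply_right]
        have hset : bkt G e2 t = {w : V | e w < e s} := by
          ext w
          constructor
          · rintro ⟨h1, h2⟩
            have hwt : w ≠ t := fun h => G.irrefl (h ▸ h1)
            by_cases hws : w = s
            · exfalso
              subst hws
              rw [he2tF, Fin.lt_def, he2s] at h2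
              omega
            · rw [he2o w hws hwt, he2tF] at h2
              exact h2
          · intro hw
            have hw' : e w < e s := hw
            have hws : w ≠ s := fun h => by subst h; exact lt_irrefl _ hw'
            have hwt : w ≠ t := by
              intro h
              subst h
              rw [Fin.lt_def, het] at hw'
              omega
            refine ⟨?_, ?_⟩
            · refine adj_of_early hKT (le_of_eq het) w ?_
              rw [Fin.lt_def, het]
              rw [Fin.lt_def] at hw'
              omega
            · rw [he2o w hws hwt, he2tF]
              exact hw'
        constructor
        · intro a ha b hb hab
          rw [hset] at ha hb
          have ha' : (e a : ℕ) < (e s : ℕ) := ha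
          have hb' : (e b : ℕ) < (e s : ℕ) := hb
          exact adj_of_early_pair hKT (by omega) (by omega) hab
        · rw [hset, ncard_pos_lt e (e s), he2tF]
          omega
      · -- v ∉ {s, t}
        have hev : e2 v = e v := he2o v hvs hvt
        have hvalv : (e2 v : ℕ) = (e v : ℕ) := by rw [hev]
        rcases lt_trichotomy ((e v : ℕ)) (e s : ℕ) with hlt | heq | hgt
        · -- case (a) : bkt unchanged
          have hset : bkt G e2 v = bkt G e v := by
            ext w
            by_cases hws : w = s
            · subst hws
              simp only [Set.mem_setOf_eq, Fin.lt_def, hvalv, he2s]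
              constructor
              · rintro ⟨_, h2⟩; omega
              · rintro ⟨_, h2⟩; omega
            · by_cases hwt : w = t
              · subst hwt
                simp only [Set.mem_setOf_eq, Fin.lt_def, hvalv, he2t, het]
                constructor
                · rintro ⟨_, h2⟩; omega
                · rintro ⟨_, h2⟩; omega
              · simp only [Set.mem_setOf_eq, Fin.lt_def, hvalv, he2o w hws hwt]
          rw [hset, hvalv]
          exact hKT v
        · exfalso; exact hvs (e.injective (Fin.ext heq))
        · rcases le_or_gt ((e v : ℕ)) k with hvk | hvk
          · -- case (b) : j < i ≤ k : exchange s for t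
            have hvk' : (e v : ℕ) < k := by
              rcases lt_or_eq_of_le hvk with h | h
              · exact h
              · exfalso
                apply hvt
                apply e.injective
                rw [ht]
                exact Fin.ext (by simp [h])
            have hsbkt : s ∈ bkt G e v := by
              refine ⟨(hadj_s v hvs (by omega)).symm, by rw [Fin.lt_def]; omega⟩
            have htnbkt : t ∉ bkt G e v := by
              rintro ⟨_, h2⟩
              rw [Fin.lt_def, het] at h2
              omega
            have hset : bkt G e2 v = insert t (bkt G e v \ {s}) := by
              ext w
              constructor
              · rintro ⟨h1, h2⟩
                by_cases hwt : w = t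
                · exact Set.mem_insert_iff.mpr (Or.inl hwt)
                · by_cases hws : w = s
                  · exfalso
                    subst hws
                    rw [Fin.lt_def, he2s, hvalv] at h2
                    omega
                  · rw [he2o w hws hwt, hev] at h2
                    exact Set.mem_insert_iff.mpr (Or.inr ⟨⟨h1, h2⟩, hws⟩)
              · intro hw
                rcases Set.mem_insert_iff.mp hw with rfl | ⟨⟨h1, h2⟩, hws⟩
                · refine ⟨adj_of_early_pair hKT hvk (le_of_eq het) hvt, ?_⟩
                  rw [Fin.lt_def, he2t, hvalv]
                  omega
                · have hwt : w ≠ t := by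
                    intro h
                    subst h
                    rw [Fin.lt_def, het] at h2
                    omega
                  refine ⟨h1, ?_⟩
                  rw [he2o w hws hwt, hev]
                  exact h2
            constructor
            · intro a ha b hb hab
              rw [hset] at ha hb
              have hmem : ∀ x, x ∈ insert t (bkt G e v \ {s}) → (e x : ℕ) ≤ k := by
                intro x hx
                rcases Set.mem_insert_iff.mp hx with rfl | hx'
                · omega
                · have h2 := hx'.1.2
                  rw [Fin.lt_def] at h2
                  omega
              exact adj_of_early_pair hKT (hmem a ha) (hmem b hb) hab
            · rw [hset, Set.ncard_insert_of_notMem (fun h => htnbkt h.1) (Set.toFinite _),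
                Set.ncard_diff_singleton_of_mem hsbkt, (hKT v).2, hvalv]
              omega
          · -- case (c) : k < i : bkt unchanged
            have hvns : ¬ G.Adj v s := by
              intro h
              have : v ∈ G.neighborSet s := h.symm
              rw [hNs] at this
              have := this.2
              omega
            have hset : bkt G e2 v = bkt G e v := by
              ext w
              constructor
              · rintro ⟨h1, h2⟩
                by_cases hws : w = s
                · exact absurd (hws ▸ h1) hvns
                · by_cases hwt : w = t
                  · subst hwt
                    refine ⟨h1, ?_⟩
                    rw [Fin.lt_def, het]
                    omega
                  · rw [he2o w hws hwt, hev] at h2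
                    exact ⟨h1, h2⟩
              · rintro ⟨h1, h2⟩
                by_cases hws : w = s
                · exact absurd (hws ▸ h1) hvns
                · by_cases hwt : w = t
                  · subst hwt
                    refine ⟨h1, ?_⟩
                    rw [Fin.lt_def, he2t, hvalv]
                    omega
                  · refine ⟨h1, ?_⟩
                    rw [he2o w hws hwt, hev]
                    exact h2
            rw [hset, hvalv]
            exact hKT v
  · intro x hx
    have hxN : x ∈ G.neighborSet s := hx
    rw [hNs] at hxN
    rw [Fin.lt_def, he2s]
    by_cases hxt : x = t
    · subst hxt; rw [he2t]; omega
    · rw [he2o x hxN.1 hxt]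
      rcases lt_or_eq_of_le hxN.2 with h | h
      · exact h
      · exfalso
        apply hxt
        apply e.injective
        rw [ht]
        exact Fin.ext (by simp [h])

end KTreeDel
section KTreeDel2
variable {V : Type*} [Fintype V] {k : ℕ} {G : SimpleGraph V}

open scoped Classical in
/-- deleting a degree-k vertex whose neighbours are all earlier -/
lemma ktree_del_last {e : V ≃ Fin (Fintype.card V)}
    (hKT : ∀ v : V, G.IsClique (bkt G e v) ∧ (bkt G e v).ncard = min (e v : ℕ) k)
    (hn : k + 2 ≤ Fintype.card V) {s : V}
    (hs : (G.neighborSet s).ncard = k) (hlast : ∀ x, G.Adj s x → e x < e s) :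
    (G.induce {s}ᶜ).IsKTree k := by
  classical
  have hcardc : Fintype.card ↥({s}ᶜ : Set V) = Fintype.card V - 1 := by
    rw [Fintype.card_compl_set]
    simp
  have hpos : 0 < Fintype.card V := Fintype.card_pos_iff.mpr ⟨s⟩
  have hn1 : Fintype.card V - 1 + 1 = Fintype.card V := by omega
  set p : Fin (Fintype.card V - 1 + 1) := Fin.cast hn1.symm (e s) with hp
  have hpval : (p : ℕ) = (e s : ℕ) := rfl
  have hxs : ∀ x : ↥({s}ᶜ : Set V), (e x.1 : ℕ) ≠ (e s : ℕ) := by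
    intro x h
    have h2 : e x.1 = e s := Fin.ext h
    exact (Set.mem_compl_singleton_iff.mp x.2) (e.injective h2)
  have hne : ∀ x : ↥({s}ᶜ : Set V), Fin.cast hn1.symm (e x.1) ≠ p := by
    intro x h
    apply hxs x
    have := congrArg Fin.val h
    exact this
  set f : ↥({s}ᶜ : Set V) → Fin (Fintype.card ↥({s}ᶜ : Set V)) :=
    fun x => Fin.cast hcardc.symm ((finSuccAboveEquiv p).symm ⟨Fin.cast hn1.symm (e x.1), hne x⟩)
    with hf
  have hinj : Function.Injective f := by
    intro x y hxy
    have h1 := congrArg Fin.val hxy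
    have h2 : (finSuccAboveEquiv p).symm ⟨Fin.cast hn1.symm (e x.1), hne x⟩ =
        (finSuccAboveEquiv p).symm ⟨Fin.cast hn1.symm (e y.1), hne y⟩ := Fin.ext h1
    have h3 := (finSuccAboveEquiv p).symm.injective h2
    have h4 : (e x.1 : ℕ) = (e y.1 : ℕ) := congrArg (Fin.val ∘ Subtype.val) h3
    exact Subtype.ext (e.injective (Fin.ext h4))
  have hbij : Function.Bijective f :=
    (Fintype.bijective_iff_injective_and_card f).mpr ⟨hinj, by simp⟩
  set E : ↥({s}ᶜ : Set V) ≃ Fin (Fintype.card ↥({s}ᶜ : Set V)) := Equiv.ofBijective f hbij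
    with hE
  have key : ∀ x : ↥({s}ᶜ : Set V),
      (E x : ℕ) = if (e x.1 : ℕ) < (e s : ℕ) then (e x.1 : ℕ) else (e x.1 : ℕ) - 1 := by
    intro x
    set j := (finSuccAboveEquiv p).symm ⟨Fin.cast hn1.symm (e x.1), hne x⟩ with hj
    have hEx : (E x : ℕ) = (j : ℕ) := rfl
    have h1 : (finSuccAboveEquiv p) j = ⟨Fin.cast hn1.symm (e x.1), hne x⟩ :=
      Equiv.apply_symm_apply _ _
    rw [finSuccAboveEquiv_apply] at h1
    have hsucc : (p.succAbove j : ℕ) = (e x.1 : ℕ) := congrArg (Fin.val ∘ Subtype.val) h1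
    rcases lt_or_ge j.castSucc p with h | h
    · rw [Fin.succAbove_of_castSucc_lt _ _ h] at hsucc
      have hcond : (j : ℕ) < (e s : ℕ) := by
        have := h
        rw [Fin.lt_def] at this
        simpa [hpval] using this
      rw [hEx]
      have : (j : ℕ) = (e x.1 : ℕ) := hsucc
      rw [if_pos (by omega)]
      omega
    · rw [Fin.succAbove_of_le_castSucc _ _ h] at hsucc
      have hcond : (e s : ℕ) ≤ (j : ℕ) := by
        have := h
        rw [Fin.le_def] at this
        simpa [hpval] using this
      have hval : (j : ℕ) + 1 = (e x.1 : ℕ) := by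
        rw [← hsucc]
        simp [Fin.val_succ]
      rw [hEx, if_neg (by omega)]
      omega
  have korder : ∀ x y : ↥({s}ᶜ : Set V), E x < E y ↔ e x.1 < e y.1 := by
    intro x y
    rw [Fin.lt_def, Fin.lt_def, key x, key y]
    have h1 := hxs x
    have h2 := hxs y
    split_ifs <;> omega
  constructor
  · omega
  refine ⟨E, ?_⟩
  intro v'
  have hsnot : s ∉ bkt G e v'.1 := by
    rintro ⟨h1, h2⟩
    have := hlast v'.1 h1.symm
    exact absurd h2 (not_lt.mpr (le_of_lt this))
  have him : Subtype.val '' {w : ↥({s}ᶜ : Set V) |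
      (G.induce {s}ᶜ).Adj v' w ∧ E w < E v'} = bkt G e v'.1 := by
    ext x
    constructor
    · rintro ⟨w, ⟨hadj, hlt⟩, rfl⟩
      exact ⟨hadj, (korder w v').mp hlt⟩
    · rintro ⟨h1, h2⟩
      have hxs' : x ≠ s := by
        intro h
        subst h
        exact hsnot ⟨h1, h2⟩
      refine ⟨⟨x, hxs'⟩, ⟨h1, (korder _ _).mpr h2⟩, rfl⟩
  have hncard : ({w : ↥({s}ᶜ : Set V) | (G.induce {s}ᶜ).Adj v' w ∧ E w < E v'}).ncard
      = min (e v'.1 : ℕ) k := by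
    rw [← (hKT v'.1).2, ← him, Set.ncard_image_of_injective _ Subtype.val_injective]
  constructor
  · intro a ha b hb hab
    have haM : a.1 ∈ bkt G e v'.1 := by
      rw [← him]; exact ⟨a, ha, rfl⟩
    have hbM : b.1 ∈ bkt G e v'.1 := by
      rw [← him]; exact ⟨b, hb, rfl⟩
    have : G.Adj a.1 b.1 := (hKT v'.1).1 haM hbM (fun h => hab (Subtype.ext h))
    exact this
  · rw [hncard, key v']
    rcases lt_trichotomy ((e v'.1 : ℕ)) ((e s : ℕ)) with h | h | h
    · rw [if_pos h]
    · exact absurd h (hxs v')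
    · rw [if_neg (by omega)]
      have hk : k < (e v'.1 : ℕ) := by
        by_contra hcon
        push_neg at hcon
        have hadj := adj_of_early hKT hcon s (by rw [Fin.lt_def]; exact h)
        have := hlast v'.1 hadj.symm
        rw [Fin.lt_def] at this
        omega
      omega

end KTreeDel2
section KTreeIso
variable {V W : Type*} [Fintype V] [Fintype W] {k : ℕ} {G : SimpleGraph V} {H : SimpleGraph W}

lemma isKTree_of_iso (φ : G ≃g H) (h : G.IsKTree k) : H.IsKTree k := by
  obtain ⟨hle, e, he⟩ := h
  have hcard : Fintype.card V = Fintype.card W := Fintype.card_congr φ.toEquiv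
  refine ⟨by omega, ?_⟩
  set e' : W ≃ Fin (Fintype.card W) := (φ.toEquiv.symm.trans e).trans (finCongr hcard) with he'
  refine ⟨e', fun w => ?_⟩
  have hval : ∀ u : W, (e' u : ℕ) = (e (φ.symm u) : ℕ) := fun u => rfl
  have horder : ∀ u u' : W, e' u < e' u' ↔ e (φ.symm u) < e (φ.symm u') := by
    intro u u'
    rw [Fin.lt_def, Fin.lt_def, hval, hval]
  have hset : {x : W | H.Adj w x ∧ e' x < e' w} =
      φ.toEquiv '' {y : V | G.Adj (φ.symm w) y ∧ e y < e (φ.symm w)} := by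
    ext x
    constructor
    · rintro ⟨h1, h2⟩
      refine ⟨φ.symm x, ⟨?_, (horder x w).mp h2⟩, by simp⟩
      have : H.Adj (φ (φ.symm w)) (φ (φ.symm x)) := by
        simpa using h1
      exact φ.map_adj_iff.mp this
    · rintro ⟨y, ⟨h1, h2⟩, rfl⟩
      constructor
      · have : H.Adj (φ (φ.symm w)) (φ y) := φ.map_adj_iff.mpr h1
        simpa using this
      · rw [horder]
        simpa using h2
  rw [hset]
  constructor
  · rintro a ⟨y1, hy1, rfl⟩ b ⟨y2, hy2, rfl⟩ hne
    have : y1 ≠ y2 := fun hh => hne (by rw [hh])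
    exact φ.map_adj_iff.mpr ((he (φ.symm w)).1 hy1 hy2 this)
  · rw [Set.ncard_image_of_injective _ φ.toEquiv.injective, (he (φ.symm w)).2, hval]

end KTreeIso
section Part2a
variable {V : Type*} [Fintype V] {k : ℕ} {G : SimpleGraph V}

lemma isKTree_inst {V' : Type*} {k : ℕ} {G' : SimpleGraph V'} (F1 F2 : Fintype V') :
    @SimpleGraph.IsKTree V' F1 k G' → @SimpleGraph.IsKTree V' F2 k G' := by
  intro h
  cases Subsingleton.elim F1 F2
  exact h

open scoped Classical in
lemma ktree_del_degk {e : V ≃ Fin (Fintype.card V)}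
    (hKT : ∀ v : V, G.IsClique (bkt G e v) ∧ (bkt G e v).ncard = min (e v : ℕ) k)
    (hn : k + 2 ≤ Fintype.card V) {s : V}
    (hs : (G.neighborSet s).ncard = k) : (G.induce {s}ᶜ).IsKTree k := by
  rcases lt_or_ge ((e s : ℕ)) k with h | h
  · obtain ⟨e2, hKT2, hlast⟩ := ktree_swap hKT hn hs h
    exact ktree_del_last hKT2 hn hs hlast
  · refine ktree_del_last hKT hn hs ?_
    intro x hx
    exact degk_late_nbr hKT hs h hx

open scoped Classical in
lemma twig_del_ktree {e : V ≃ Fin (Fintype.card V)}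
    (hKT : ∀ v : V, G.IsClique (bkt G e v) ∧ (bkt G e v).ncard = min (e v : ℕ) k)
    (hk : 1 ≤ k) (hcard : k + 3 ≤ Fintype.card V)
    (htough : G.ToughnessGT ((k : ℝ) / 3)) {v : V} (htwig : G.IsTwig k v) :
    (G.induce (G.bud k v)ᶜ).IsKTree k := by
  have hle2 : (G.bud k v).ncard ≤ 2 := bud_ncard_le_two hKT hk hcard htwig htough
  have hpos : 0 < (G.bud k v).ncard := (Set.ncard_pos (Set.toFinite _)).mpr htwig.2.1
  rcases Nat.lt_or_ge ((G.bud k v).ncard) 2 with h1 | h1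
  · -- singleton bud
    have h1' : (G.bud k v).ncard = 1 := by omega
    obtain ⟨s, hSeq⟩ := Set.ncard_eq_one.mp h1'
    have hsm : s ∈ G.bud k v := by rw [hSeq]; rfl
    rw [hSeq]
    exact ktree_del_degk hKT (by omega) hsm.2
  · -- two-element bud
    have h2 : (G.bud k v).ncard = 2 := by omega
    obtain ⟨s₁, s₂, hs12, hSeq⟩ := Set.ncard_eq_two.mp h2
    have h1m : s₁ ∈ G.bud k v := by rw [hSeq]; exact Set.mem_insert _ _
    have h2m : s₂ ∈ G.bud k v := by rw [hSeq]; exact Set.mem_insert_of_mem _ rfl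
    have hnadj : ¬ G.Adj s₁ s₂ := bud_indep hKT hk hcard h1m h2m
    have hcard1 : Fintype.card ↥({s₁}ᶜ : Set V) = Fintype.card V - 1 := by
      rw [Fintype.card_compl_set]; simp
    obtain ⟨hle1, e1, hKT1⟩ := ktree_del_degk hKT (by omega) h1m.2
    have hs₂mem : s₂ ∈ ({s₁}ᶜ : Set V) := fun h => hs12 (Set.mem_singleton_iff.mp h).symm
    set s₂' : ↥({s₁}ᶜ : Set V) := ⟨s₂, hs₂mem⟩ with hs₂'
    have hdeg2 : ((G.induce {s₁}ᶜ).neighborSet s₂').ncard = k := by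
      have him : Subtype.val '' ((G.induce {s₁}ᶜ).neighborSet s₂') = G.neighborSet s₂ := by
        ext x
        constructor
        · rintro ⟨w, hw, rfl⟩
          exact hw
        · intro hx
          have hxs₁ : x ∈ ({s₁}ᶜ : Set V) := by
            intro h
            rw [Set.mem_singleton_iff] at h
            subst h
            exact hnadj hx.symm
          exact ⟨⟨x, hxs₁⟩, hx, rfl⟩
      rw [← h2m.2, ← him, Set.ncard_image_of_injective _ Subtype.val_injective]
    have hktree2 := ktree_del_degk hKT1 (by omega) hdeg2
    -- transport along the natural iso
    have hmem3 : ∀ x : ↥({s₂'}ᶜ : Set ↥({s₁}ᶜ : Set V)), x.1.1 ∈ ({s₁, s₂}ᶜ : Set V) := by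
      rintro ⟨⟨x, hx1⟩, hx2⟩
      rintro (h | h)
      · exact hx1 h
      · apply hx2
        rw [Set.mem_singleton_iff] at h ⊢
        exact Subtype.ext h
    have hmem4 : ∀ y : ↥(({s₁, s₂} : Set V)ᶜ), y.1 ∈ ({s₁}ᶜ : Set V) := by
      rintro ⟨y, hy⟩
      intro h
      exact hy (Set.mem_insert_iff.mpr (Or.inl (Set.mem_singleton_iff.mp h)))
    have hmem5 : ∀ y : ↥(({s₁, s₂} : Set V)ᶜ), (⟨y.1, hmem4 y⟩ : ↥({s₁}ᶜ : Set V)) ∈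
        ({s₂'}ᶜ : Set ↥({s₁}ᶜ : Set V)) := by
      rintro ⟨y, hy⟩
      intro h
      rw [Set.mem_singleton_iff] at h
      apply hy
      right
      rw [Set.mem_singleton_iff]
      exact congrArg Subtype.val h
    set ψe : ↥({s₂'}ᶜ : Set ↥({s₁}ᶜ : Set V)) ≃ ↥(({s₁, s₂} : Set V)ᶜ) :=
      { toFun := fun x => ⟨x.1.1, hmem3 x⟩
        invFun := fun y => ⟨⟨y.1, hmem4 y⟩, hmem5 y⟩
        left_inv := fun x => by apply Subtype.ext; apply Subtype.ext; rfl
        right_inv := fun y => by apply Subtype.ext; rfl } with hψe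
    have hψ : ((G.induce {s₁}ᶜ).induce {s₂'}ᶜ) ≃g (G.induce ({s₁, s₂} : Set V)ᶜ) :=
      ⟨ψe, by intro a b; rfl⟩
    rw [hSeq]
    exact isKTree_inst _ _ (isKTree_of_iso hψ (isKTree_inst _ _ hktree2))
end Part2a
section Exists
variable {V : Type*} [Fintype V] {k : ℕ} {G : SimpleGraph V} {e : V ≃ Fin (Fintype.card V)}

lemma subset_omit {A C : Set V} (h : A ⊆ C) (hc : C.ncard = A.ncard + 1) :
    ∃ c ∈ C, A = C \ {c} ∧ c ∉ A := by
  have h1 : (C \ A).ncard = 1 := by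
    rw [Set.ncard_diff h (Set.toFinite _)]
    omega
  obtain ⟨c, hc1⟩ := Set.ncard_eq_one.mp h1
  have hcc : c ∈ C \ A := by rw [hc1]; rfl
  refine ⟨c, hcc.1, ?_, hcc.2⟩
  apply Set.eq_of_subset_of_ncard_le
  · intro x hx
    refine ⟨h hx, ?_⟩
    intro hxc
    rw [Set.mem_singleton_iff] at hxc
    exact hcc.2 (hxc ▸ hx)
  · rw [Set.ncard_diff_singleton_of_mem hcc.1]
    omega
  · exact Set.toFinite _

lemma exists_twig
    (hKT : ∀ v : V, G.IsClique (bkt G e v) ∧ (bkt G e v).ncard = min (e v : ℕ) k)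
    (hk : 1 ≤ k) (hcard : k + 3 ≤ Fintype.card V)
    (htough : G.ToughnessGT ((k : ℝ) / 3)) : ∃ v, G.IsTwig k v := by
  classical
  obtain ⟨b0, hb0⟩ := exists_deg_ne hKT hk (by omega)
  -- maximal-position vertex of degree ≠ k
  obtain ⟨v, hvmem, hvmax⟩ := Finset.exists_max_image
    (Finset.univ.filter (fun x : V => (G.neighborSet x).ncard ≠ k)) (fun x => (e x : ℕ))
    ⟨b0, by simp [hb0]⟩
  have hvL : (G.neighborSet v).ncard ≠ k := by
    simpa using hvmem
  have hafter : ∀ w, (e v : ℕ) < (e w : ℕ) → (G.neighborSet w).ncard = k := by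
    intro w hw
    by_contra h
    have := hvmax w (by simpa using h)
    omega
  -- Step 1 : k ≤ e v
  have hvk : k ≤ (e v : ℕ) := by
    by_contra hlt
    push_neg at hlt
    set X : Set V := {x : V | (e x : ℕ) ≤ (e v : ℕ)} with hX
    have hXcard : X.ncard = (e v : ℕ) + 1 := ncard_pos_le e (e v)
    have hz : ∀ z, k < (e z : ℕ) → G.neighborSet z ⊆ X := by
      intro z hzk
      have hzL : (G.neighborSet z).ncard = k := hafter z (by omega)
      have hNz := degk_late hKT hzL (by omega)
      intro x hx
      by_contra hxv
      simp only [hX, Set.mem_setOf_eq, not_le] at hxv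
      have hxL : (G.neighborSet x).ncard = k := hafter x hxv
      have hzNx : z ∈ G.neighborSet x := hx.symm
      have hxNz : x ∈ G.neighborSet z := hx
      rw [hNz] at hxNz
      rcases lt_or_ge ((e x : ℕ)) k with hxk | hxk
      · have hNx := degk_early hKT (by omega) hxL hxk
        rw [hNx] at hzNx
        have := hzNx.2
        omega
      · have hNx := degk_late hKT hxL hxk
        rw [hNx] at hzNx
        have h1 := hzNx.2
        have h2 := hxNz.2
        rw [Fin.lt_def] at h1 h2
        omega
    -- the three late vertices
    have hn1 : Fintype.card V - 1 < Fintype.card V := by omega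
    have hn2 : Fintype.card V - 2 < Fintype.card V := by omega
    set z1 : V := e.symm ⟨Fintype.card V - 1, hn1⟩ with hz1
    set z2 : V := e.symm ⟨Fintype.card V - 2, hn2⟩ with hz2
    have hez1 : (e z1 : ℕ) = Fintype.card V - 1 := by rw [hz1]; simp
    have hez2 : (e z2 : ℕ) = Fintype.card V - 2 := by rw [hz2]; simp
    -- derive e v = k - 1
    have hevk : (e v : ℕ) = k - 1 := by
      have hsub := hz z1 (by omega)
      have hzL : (G.neighborSet z1).ncard = k := hafter z1 (by omega)
      have := Set.ncard_le_ncard hsub (Set.toFinite _)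
      rw [hzL, hXcard] at this
      omega
    have hXk : X.ncard = k := by omega
    have hz12 : z1 ≠ z2 := by
      intro h
      rw [h] at hez1
      omega
    have hmemX : ∀ z, k < (e z : ℕ) → z ∉ X := by
      intro z hzk hzX
      simp only [hX, Set.mem_setOf_eq] at hzX
      omega
    set u : V := e.symm ⟨k, by omega⟩ with hu
    have heu : (e u : ℕ) = k := by rw [hu]; simp
    have huz1 : u ≠ z1 := by intro h; rw [h, hez1] at heu; omega
    have huz2 : u ≠ z2 := by intro h; rw [h, hez2] at heu; omega
    exact tough_contra3 htough
      (three_components (hmemX z1 (by omega)) (hmemX z2 (by omega)) (show u ∉ X from fun h => by have h' : (e u : ℕ) ≤ (e v : ℕ) := h; omega)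
        hz12 (huz1.symm) (huz2.symm) (hz z1 (by omega)) (hz z2 (by omega)))
      (le_of_eq hXk)
  -- Step 2 : v has a forward neighbour
  have hBcard : (bkt G e v).ncard = k := by rw [(hKT v).2]; omega
  have hF : ∃ x, G.Adj v x ∧ e v < e x := by
    by_contra hcon
    push_neg at hcon
    apply hvL
    rw [← hBcard]
    congr 1
    ext x
    constructor
    · intro hx
      have hxv : x ≠ v := G.ne_of_adj hx.symm
      have hle := hcon x hx
      refine ⟨hx, ?_⟩
      rcases lt_or_eq_of_le hle with h | h
      · exact h
      · exact absurd (e.injective h) hxv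
    · intro hx
      exact hx.1
  obtain ⟨x₀, hx₀a, hx₀e⟩ := hF
  have hFL : ∀ x, G.Adj v x → e v < e x →
      (G.neighborSet x).ncard = k ∧ G.neighborSet x = bkt G e x := by
    intro x hadj hlt
    have hlt' : (e v : ℕ) < (e x : ℕ) := by rw [← Fin.lt_def]; exact hlt
    have hdx : (G.neighborSet x).ncard = k := hafter x hlt'
    exact ⟨hdx, degk_late hKT hdx (by omega)⟩
  -- Step 3 : no back-neighbour has degree k
  have hBL : ∀ b, b ∈ bkt G e v → (G.neighborSet b).ncard ≠ k := by
    rintro b ⟨hba, hbe⟩ hbL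
    have hbe' : (e b : ℕ) < (e v : ℕ) := by rw [← Fin.lt_def]; exact hbe
    rcases le_or_gt k ((e b : ℕ)) with hbk | hbk
    · have := degk_late_nbr hKT hbL hbk hba.symm
      rw [Fin.lt_def] at this
      omega
    · have hNb := degk_early hKT (by omega) hbL hbk
      have hvNb : v ∈ G.neighborSet b := hba.symm
      rw [hNb] at hvNb
      have hevk : (e v : ℕ) = k := le_antisymm hvNb.2 hvk
      set X : Set V := {u : V | u ≠ b ∧ (e u : ℕ) ≤ k} with hX
      have hXcard : X.ncard = k := by
        have h1 : X = {u : V | (e u : ℕ) ≤ k} \ {b} := by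
          ext y
          simp only [hX, Set.mem_setOf_eq, Set.mem_diff, Set.mem_singleton_iff]
          tauto
        have h2 : {u : V | (e u : ℕ) ≤ k} = {u : V | e u ≤ (⟨k, by omega⟩ : Fin (Fintype.card V))} := by
          ext y; simp [Fin.le_def]
        rw [h1, h2, Set.ncard_diff_singleton_of_mem (by simp [Fin.le_def]; omega),
          ncard_pos_le]
        simp
      have hbX : b ∉ X := fun h => h.1 rfl
      have hNbX : G.neighborSet b ⊆ X := by rw [hNb]
      have hex₀ : (e x₀ : ℕ) > k := by
        have := hx₀e; rw [Fin.lt_def] at this; omega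
      have hx₀X : x₀ ∉ X := fun h => by
        have := h.2; omega
      have hNx₀ := (hFL x₀ hx₀a hx₀e).2
      have hvbkt : v ∈ bkt G e x₀ := ⟨hx₀a.symm, hx₀e⟩
      have hNx₀X : G.neighborSet x₀ ⊆ X := by
        rw [hNx₀]
        intro y hy
        by_cases hyv : y = v
        · subst hyv
          refine ⟨?_, by omega⟩
          intro h
          rw [h] at hevk
          omega
        · have hyadj : G.Adj y v := (hKT x₀).1 hy hvbkt hyv
          have hyb : y ≠ b := by
            intro h
            subst h
            have : x₀ ∈ G.neighborSet y := hy.1.symm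
            rw [hNb] at this
            have := this.2
            omega
          refine ⟨hyb, ?_⟩
          rcases lt_or_ge ((e y : ℕ)) ((e v : ℕ)) with h | h
          · omega
          · exfalso
            have hyv' : e v < e y := by
              rw [Fin.lt_def]
              rcases lt_or_eq_of_le h with h' | h'
              · exact h'
              · exact absurd (e.injective (Fin.ext h'.symm)) hyv
            have hNy := (hFL y hyadj.symm hyv').2
            have hx₀Ny : x₀ ∈ G.neighborSet y := hy.1.symm
            rw [hNy] at hx₀Ny
            have h1 := hx₀Ny.2
            have h2 := hy.2
            rw [Fin.lt_def] at h1 h2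
            omega
      have hbx₀ : b ≠ x₀ := by
        intro h
        rw [h] at hbk
        omega
      -- third vertex
      have hn1 : Fintype.card V - 1 < Fintype.card V := by omega
      have hn2 : Fintype.card V - 2 < Fintype.card V := by omega
      set z1 : V := e.symm ⟨Fintype.card V - 1, hn1⟩ with hz1
      set z2 : V := e.symm ⟨Fintype.card V - 2, hn2⟩ with hz2
      have hez1 : (e z1 : ℕ) = Fintype.card V - 1 := by rw [hz1]; simp
      have hez2 : (e z2 : ℕ) = Fintype.card V - 2 := by rw [hz2]; simp
      have hz12 : z1 ≠ z2 := by
        intro h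
        have : (e z1 : ℕ) = (e z2 : ℕ) := by rw [h]
        rw [hez1, hez2] at this
        omega
      by_cases hxz : x₀ = z1
      · refine tough_contra3 htough
          (three_components hbX hx₀X (show z2 ∉ X from fun h => by have := h.2; omega)
            hbx₀ (show b ≠ z2 from fun h => by rw [h, hez2] at hbk; omega)
            (show x₀ ≠ z2 from fun h => hz12 (by rw [← hxz, h]))
            hNbX hNx₀X) (le_of_eq hXcard)
      · exact tough_contra3 htough
          (three_components hbX hx₀X (show z1 ∉ X from fun h => by have := h.2; omega)
            hbx₀ (show b ≠ z1 from fun h => by rw [h, hez1] at hbk; omega) hxz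
            hNbX hNx₀X) (le_of_eq hXcard)
  -- bud structure at v
  have hbud_eq : G.neighborSet v \ G.bud k v = bkt G e v := by
    ext x
    constructor
    · rintro ⟨hx1, hx2⟩
      have hxadj : G.Adj v x := hx1
      rcases lt_trichotomy (e x) (e v) with h | h | h
      · exact ⟨hxadj, h⟩
      · exact absurd (e.injective h).symm (G.ne_of_adj hxadj)
      · exfalso
        exact hx2 ⟨hxadj, hafter x (by rw [Fin.lt_def] at h; exact h)⟩
    · intro hx
      refine ⟨hx.1, ?_⟩
      rintro ⟨_, hdeg⟩
      exact hBL x hx hdeg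
  have hx₀bud : x₀ ∈ G.bud k v := ⟨hx₀a, (hFL x₀ hx₀a hx₀e).1⟩
  by_cases huni : ∃ w, w ≠ v ∧ ¬ G.Adj v w
  · exact ⟨v, huni, ⟨x₀, hx₀bud⟩, by rw [hbud_eq]; exact (hKT v).1,
      by rw [hbud_eq]; exact hBcard⟩
  · push_neg at huni
    -- v is universal
    have hevk : (e v : ℕ) = k := by
      have hsub : {w : V | e w < e v} ⊆ bkt G e v := by
        intro w hw
        have hw' : e w < e v := hw
        have hwv : w ≠ v := fun h => by subst h; exact lt_irrefl _ hw'
        exact ⟨huni w hwv, hw'⟩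
      have h1 : ({w : V | e w < e v}).ncard ≤ k := by
        rw [← hBcard]
        exact Set.ncard_le_ncard hsub (Set.toFinite _)
      rw [ncard_pos_lt e (e v)] at h1
      omega
    set Qm : Set V := {u : V | (e u : ℕ) ≤ k} with hQm
    have hQmcard : Qm.ncard = k + 1 :=
      ncard_pos_le e (⟨k, by omega⟩ : Fin (Fintype.card V))
    have hW : ∀ w, k < (e w : ℕ) →
        G.neighborSet w ⊆ Qm ∧ v ∈ G.neighborSet w ∧ (G.neighborSet w).ncard = k := by
      intro w hwk
      have hwv : w ≠ v := by
        intro h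
        rw [h, hevk] at hwk
        omega
      have hdw : (G.neighborSet w).ncard = k := hafter w (by omega)
      have hNw := degk_late hKT hdw (by omega)
      refine ⟨?_, (huni w hwv).symm, hdw⟩
      intro y hy
      rcases le_or_gt ((e y : ℕ)) k with h | h
      · exact h
      · exfalso
        have hdy : (G.neighborSet y).ncard = k := hafter y (by omega)
        have hNy := degk_late hKT hdy (by omega)
        have h1 : y ∈ bkt G e w := by rw [← hNw]; exact hy
        have h2 : w ∈ G.neighborSet y := hy.symm
        rw [hNy] at h2
        have h3 := h1.2
        have h4 := h2.2
        rw [Fin.lt_def] at h3 h4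
        omega
    have hn1 : Fintype.card V - 1 < Fintype.card V := by omega
    have hn2 : Fintype.card V - 2 < Fintype.card V := by omega
    set w₁ : V := e.symm ⟨Fintype.card V - 1, hn1⟩ with hw₁
    set w₂ : V := e.symm ⟨Fintype.card V - 2, hn2⟩ with hw₂
    have hew₁ : (e w₁ : ℕ) = Fintype.card V - 1 := by rw [hw₁]; simp
    have hew₂ : (e w₂ : ℕ) = Fintype.card V - 2 := by rw [hw₂]; simp
    have hw₁k : k < (e w₁ : ℕ) := by omega
    have hw₂k : k < (e w₂ : ℕ) := by omega
    have hw12 : w₁ ≠ w₂ := by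
      intro h
      have : (e w₁ : ℕ) = (e w₂ : ℕ) := by rw [h]
      omega
    obtain ⟨hsub1, hv1, hd1⟩ := hW w₁ hw₁k
    obtain ⟨hsub2, hv2, hd2⟩ := hW w₂ hw₂k
    obtain ⟨c₁, hc₁Q, hc₁, hc₁n⟩ := subset_omit hsub1 (by rw [hQmcard, hd1])
    obtain ⟨c₂, hc₂Q, hc₂, hc₂n⟩ := subset_omit hsub2 (by rw [hQmcard, hd2])
    have hWnotQ : ∀ w, k < (e w : ℕ) → w ∉ Qm := by
      intro w hwk hwQ
      simp only [hQm, Set.mem_setOf_eq] at hwQ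
      omega
    have hc12 : c₁ ≠ c₂ := by
      intro h
      subst h
      set X : Set V := Qm \ {c₁} with hX
      have hXcard : X.ncard = k := by
        rw [hX, Set.ncard_diff_singleton_of_mem hc₁Q, hQmcard]
        omega
      have hcX : c₁ ∉ X := fun hc => hc.2 rfl
      exact tough_contra3 htough
        (three_components (hWnotQ w₁ hw₁k ∘ fun h => h.1) (hWnotQ w₂ hw₂k ∘ fun h => h.1)
          hcX hw12
          (fun h => hWnotQ w₁ hw₁k (h ▸ hc₁Q))
          (fun h => hWnotQ w₂ hw₂k (h ▸ hc₂Q))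
          (by rw [hc₁]) (by rw [hc₂])) (le_of_eq hXcard)
    -- the twig is c₁
    have hbQ : c₁ ∈ Qm := hc₁Q
    have hbk : (e c₁ : ℕ) ≤ k := hbQ
    have hbw₁ : ¬ G.Adj c₁ w₁ := by
      intro h
      have : c₁ ∈ G.neighborSet w₁ := h.symm
      rw [hc₁] at this
      exact this.2 rfl
    have hbw₂ : G.Adj c₁ w₂ := by
      have : c₁ ∈ G.neighborSet w₂ := by
        rw [hc₂]
        exact ⟨hc₁Q, fun h => hc12 h⟩
      exact this.symm
    have hbne₁ : w₁ ≠ c₁ := fun h => hWnotQ w₁ hw₁k (h ▸ hc₁Q)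
    have hbud_b : G.neighborSet c₁ \ G.bud k c₁ = Qm \ {c₁} := by
      ext x
      constructor
      · rintro ⟨hx1, hx2⟩
        have hxadj : G.Adj c₁ x := hx1
        rcases le_or_gt ((e x : ℕ)) k with h | h
        · exact ⟨h, fun hh => (G.ne_of_adj hxadj) (Set.mem_singleton_iff.mp hh).symm⟩
        · exact absurd ⟨hxadj, hafter x (by omega)⟩ hx2
      · rintro ⟨hx1, hx2⟩
        have hxb : c₁ ≠ x := fun h => hx2 (Set.mem_singleton_iff.mpr h.symm)
        have hxadj : G.Adj c₁ x := adj_of_early_pair hKT hbk hx1 hxb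
        refine ⟨hxadj, ?_⟩
        rintro ⟨_, hdx⟩
        rcases lt_or_eq_of_le (show (e x : ℕ) ≤ k from hx1) with h | h
        · have hNx := degk_early hKT (by omega) hdx h
          have hxw₁ : x ∉ G.neighborSet w₁ := by
            intro hmem
            have : w₁ ∈ G.neighborSet x := hmem.symm
            rw [hNx] at this
            have := this.2
            omega
          rw [hc₁] at hxw₁
          have : x = c₁ := by
            by_contra hcon
            exact hxw₁ ⟨hx1, fun hh => hcon (Set.mem_singleton_iff.mp hh)⟩
          exact hxb this.symm
        · have : x = v := e.injective (Fin.ext (by rw [h, hevk]))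
          rw [this] at hdx
          exact hvL hdx
    refine ⟨c₁, ⟨w₁, hbne₁, hbw₁⟩, ⟨w₂, hbw₂, hd2⟩, ?_, ?_⟩
    · rw [hbud_b]
      intro a ha b' hb' hab
      exact adj_of_early_pair hKT ha.1 hb'.1 hab
    · rw [hbud_b, Set.ncard_diff_singleton_of_mem hc₁Q, hQmcard]
      omega

end Exists
open scoped Classical in
theorem ktree_has_twig_and_bud_removal {V : Type*} [Fintype V] (k : ℕ) (hk : 1 ≤ k)
    (G : SimpleGraph V) (hcard : k + 3 ≤ Fintype.card V) (hG : G.IsKTree k)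
    (htough : G.ToughnessGT ((k : ℝ) / 3)) :
    (∃ v, G.IsTwig k v) ∧
      ∀ v, G.IsTwig k v →
        (G.induce (G.bud k v)ᶜ).IsKTree k ∧
        (G.induce (G.bud k v)ᶜ).ToughnessGT ((k : ℝ) / 3) ∧
        (2 ≤ k → G.IsSqueeze v (G.bud k v)) := by
  obtain ⟨hle, e, hKT⟩ := hG
  refine ⟨exists_twig hKT hk hcard htough, ?_⟩
  intro v htwig
  refine ⟨twig_del_ktree hKT hk hcard htough htwig, ?_,
    fun hk2 => twig_squeeze hKT hk hcard htwig htough hk2⟩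
  exact tough_del (fun s hs => degk_clique hKT (by omega) hs.2)
    (fun s hs t ht => bud_indep hKT hk hcard hs ht) htough
end

section
/- The square of a k-connected graph is k-tough. -/
open SimpleGraph

theorem square_of_kconnected_is_ktough {V : Type*} [Fintype V] (k : ℕ)
    (G : SimpleGraph V) (hG : G.IsKConnected k) :
    G.square.ToughGE (k : ℝ) := by
  classical
  intro X hX
  set H := (G.square.induce Xᶜ) with hH
  set C : H.ConnectedComponent → Set V :=
    fun K => {v : V | ∃ h : v ∈ Xᶜ, H.connectedComponentMk ⟨v, h⟩ = K} with hCdef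
  set f : H.ConnectedComponent → Set V :=
    fun K => {x : V | x ∈ X ∧ ∃ u ∈ C K, G.Adj x u} with hfdef
  have key : ∀ K, ∀ w w' : V, w ∈ C K → G.Adj w w' → w' ∉ f K → w' ∈ C K := by
    intro K w w' hw hadj hnf
    by_cases hX' : w' ∈ X
    · exact absurd ⟨hX', w, hw, hadj.symm⟩ hnf
    · obtain ⟨hwX, hKw⟩ := hw
      have hAdj : H.Adj ⟨w, hwX⟩ ⟨w', hX'⟩ := by
        show G.square.Adj w w'
        exact ⟨hadj.ne, Or.inl hadj⟩
      exact ⟨hX', by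
        rw [← hKw]
        exact (ConnectedComponent.connectedComponentMk_eq_of_adj hAdj).symm⟩
  have hcard : ∀ K, k ≤ (f K).ncard := by
    intro K
    by_contra hlt
    push_neg at hlt
    have hconn := hG.2 (f K) hlt
    obtain ⟨⟨u, huX⟩, hu⟩ := K.exists_rep
    haveI : Nontrivial H.ConnectedComponent := Finite.one_lt_card_iff_nontrivial.mp hX
    obtain ⟨K', hK'⟩ := exists_ne K
    obtain ⟨⟨v, hvX⟩, hv⟩ := K'.exists_rep
    have huf : u ∈ (f K)ᶜ := fun h => huX h.1
    have hvf : v ∈ (f K)ᶜ := fun h => hvX h.1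
    obtain ⟨p⟩ := hconn.preconnected ⟨u, huf⟩ ⟨v, hvf⟩
    have walkinv : ∀ (a b : ↥(f K)ᶜ) (p : (G.induce (f K)ᶜ).Walk a b), ↑a ∈ C K → ↑b ∈ C K := by
      intro a b p
      induction p with
      | nil => exact id
      | @cons a c b h p ih =>
        intro ha
        exact ih (key K _ _ ha h c.2)
    have hvC : v ∈ C K := walkinv _ _ p ⟨huX, hu⟩
    obtain ⟨h1, h2⟩ := hvC
    apply hK'
    rw [← hv, ← h2]
    rfl
  have hdisj : ∀ K₁ K₂ : H.ConnectedComponent, K₁ ≠ K₂ → Disjoint (f K₁) (f K₂) := by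
    intro K₁ K₂ hne
    rw [Set.disjoint_left]
    rintro x ⟨hx1, u, ⟨huX, hu⟩, hxu⟩ ⟨hx2, v, ⟨hvX, hv⟩, hxv⟩
    by_cases huv : u = v
    · apply hne
      subst huv
      rw [← hu, ← hv]
    · have hAdj : H.Adj ⟨u, huX⟩ ⟨v, hvX⟩ := by
        show G.square.Adj u v
        exact ⟨huv, Or.inr ⟨x, hxu.symm, hxv⟩⟩
      apply hne
      rw [← hu, ← hv]
      exact ConnectedComponent.connectedComponentMk_eq_of_adj hAdj
  haveI : Fintype H.ConnectedComponent := Fintype.ofFinite _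
  have hsum : k * Nat.card H.ConnectedComponent ≤ X.ncard := by
    have hc : Nat.card H.ConnectedComponent = Fintype.card H.ConnectedComponent :=
      Nat.card_eq_fintype_card
    calc k * Nat.card H.ConnectedComponent
        = ∑ _K : H.ConnectedComponent, k := by
          rw [Finset.sum_const, smul_eq_mul, hc, mul_comm, Finset.card_univ]
      _ ≤ ∑ K : H.ConnectedComponent, (f K).toFinset.card := by
          refine Finset.sum_le_sum fun K _ => ?_
          rw [← Set.ncard_eq_toFinset_card']
          exact hcard K
      _ = (Finset.univ.biUnion (fun K => (f K).toFinset)).card := by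
          refine (Finset.card_biUnion ?_).symm
          intro K₁ _ K₂ _ hne
          exact Set.disjoint_toFinset.mpr (hdisj K₁ K₂ hne)
      _ ≤ X.toFinset.card := by
          refine Finset.card_le_card ?_
          intro x hx
          simp only [Finset.mem_biUnion, Set.mem_toFinset] at hx ⊢
          obtain ⟨K, _, hK⟩ := hx
          exact hK.1
      _ = X.ncard := (Set.ncard_eq_toFinset_card' X).symm
  calc (k : ℝ) * Nat.card H.ConnectedComponent
      = ((k * Nat.card H.ConnectedComponent : ℕ) : ℝ) := by push_cast; ring
    _ ≤ X.ncard := by exact_mod_cast hsum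
end

section
/- The square of a tree is a chordal graph. -/
open SimpleGraph

namespace TreeSquareAux

variable {V : Type*} {G : SimpleGraph V}

lemma dist_lt_of_mem_support [DecidableEq V] {r a w : V} (Q : G.Walk r a) (hw : w ∈ Q.support)
    (hne : w ≠ a) : G.dist r w < Q.length := by
  have hspec := Q.take_spec hw
  have hlen : (Q.takeUntil w hw).length + (Q.dropUntil w hw).length = Q.length := by
    rw [← Walk.length_append, hspec]
  have h1 : G.dist r w ≤ (Q.takeUntil w hw).length := dist_le _
  have h2 : (Q.dropUntil w hw).length ≠ 0 := fun h0 => hne (Walk.eq_of_length_eq_zero h0)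
  omega

/-- In a tree, a neighbour of `u` has distance to `r` differing by exactly one. -/
lemma adj_dist (hT : G.IsTree) (r : V) {u a : V} (h : G.Adj u a) :
    G.dist r a = G.dist r u + 1 ∨ G.dist r a + 1 = G.dist r u := by
  classical
  have hconn := hT.isConnected
  have h1 : G.dist r a ≤ G.dist r u + 1 := by
    have := hconn.dist_triangle (u := r) (v := u) (w := a)
    rw [dist_eq_one_iff_adj.mpr h] at this; omega
  have h2 : G.dist r u ≤ G.dist r a + 1 := by
    have := hconn.dist_triangle (u := r) (v := a) (w := u)
    rw [dist_eq_one_iff_adj.mpr h.symm] at this; omega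
  rcases Nat.lt_trichotomy (G.dist r a) (G.dist r u) with hlt | heq | hgt
  · right; omega
  · exfalso
    set d := G.dist r u with hd
    obtain ⟨P, hP, hPlen⟩ := hconn.exists_path_of_dist r u
    obtain ⟨Q, hQ, hQlen⟩ := hconn.exists_path_of_dist r a
    have huQ : u ∉ Q.support := by
      intro hu
      have := dist_lt_of_mem_support Q hu h.ne
      omega
    have hP2 : (Walk.cons h Q.reverse).reverse.IsPath := by
      rw [Walk.isPath_reverse_iff]
      refine hQ.reverse.cons ?_
      rwa [Walk.support_reverse, List.mem_reverse]
    have := (hT.existsUnique_path r u).unique hP hP2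
    have hl := congr_arg Walk.length this
    simp only [Walk.length_reverse, Walk.length_cons] at hl
    omega
  · left; omega

/-- Uniqueness of the parent in a tree. -/
lemma parent_unique (hT : G.IsTree) (r : V) {u a b : V} (ha : G.Adj u a) (hb : G.Adj u b)
    (hda : G.dist r a + 1 = G.dist r u) (hdb : G.dist r b + 1 = G.dist r u) : a = b := by
  classical
  by_contra hne
  have hconn := hT.isConnected
  obtain ⟨Qa, hQa, hQalen⟩ := hconn.exists_path_of_dist r a
  obtain ⟨Qb, hQb, hQblen⟩ := hconn.exists_path_of_dist r b
  have huQa : u ∉ Qa.support := fun hu => by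
    have := dist_lt_of_mem_support Qa hu ha.ne; omega
  have huQb : u ∉ Qb.support := fun hu => by
    have := dist_lt_of_mem_support Qb hu hb.ne; omega
  have hPa : (Walk.cons ha Qa.reverse).reverse.IsPath := by
    rw [Walk.isPath_reverse_iff]
    refine hQa.reverse.cons ?_
    rwa [Walk.support_reverse, List.mem_reverse]
  have hPb : (Walk.cons hb Qb.reverse).reverse.IsPath := by
    rw [Walk.isPath_reverse_iff]
    refine hQb.reverse.cons ?_
    rwa [Walk.support_reverse, List.mem_reverse]
  have heq := (hT.existsUnique_path r u).unique hPa hPb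
  have haPa : a ∈ (Walk.cons ha Qa.reverse).reverse.support := by
    simp only [Walk.support_reverse, List.mem_reverse, Walk.support_cons, List.mem_cons]
    right
    simp [Walk.support_reverse]
  rw [heq] at haPa
  simp only [Walk.support_reverse, List.mem_reverse, Walk.support_cons, List.mem_cons] at haPa
  rcases haPa with h1 | h1
  · exact ha.ne h1.symm
  · have := dist_lt_of_mem_support Qb h1 hne
    omega

/-- Existence of the parent in a tree. -/
lemma parent_exists (hT : G.IsTree) {r u : V} (hne : u ≠ r) :
    ∃ p, G.Adj u p ∧ G.dist r p + 1 = G.dist r u := by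
  classical
  have hconn := hT.isConnected
  obtain ⟨P, hP, hPlen⟩ := hconn.exists_path_of_dist r u
  have hd : 0 < G.dist r u := hconn.pos_dist_of_ne (fun h => hne h.symm)
  have hnil : ¬ P.reverse.Nil := by
    rw [Walk.not_nil_iff_lt_length, Walk.length_reverse]; omega
  refine ⟨P.reverse.getVert 1, P.reverse.adj_snd hnil, ?_⟩
  have h1 : G.dist (P.reverse.getVert 1) r ≤ P.reverse.tail.length := dist_le _
  have h2 : P.reverse.tail.length + 1 = P.reverse.length := Walk.length_tail_add_one hnil
  rw [Walk.length_reverse] at h2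
  have h3 : G.dist r u ≤ G.dist r (P.reverse.getVert 1) + 1 := by
    have := hconn.dist_triangle (u := r) (v := P.reverse.getVert 1) (w := u)
    rw [dist_eq_one_iff_adj.mpr (P.reverse.adj_snd hnil).symm] at this; omega
  rw [SimpleGraph.dist_comm] at h1
  omega

lemma getVert_getElem? {a b : V} (p : G.Walk a b) :
    ∀ {i : ℕ}, i ≤ p.length → p.support[i]? = some (p.getVert i) := by
  induction p with
  | nil =>
    intro i hi
    simp only [Walk.length_nil, Nat.le_zero] at hi
    subst hi
    simp [Walk.getVert]
  | cons h q ih =>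
    intro i hi
    cases i with
    | zero => simp
    | succ n =>
      rw [Walk.support_cons, Walk.getVert_cons_succ, List.getElem?_cons_succ]
      exact ih (by simpa [Nat.succ_le_succ_iff] using hi)

lemma getVert_inj_cycle {u : V} {c : G.Walk u u} (hc : c.IsCycle) {i j : ℕ}
    (hi1 : 1 ≤ i) (hi : i ≤ c.length) (hj1 : 1 ≤ j) (hj : j ≤ c.length)
    (h : c.getVert i = c.getVert j) : i = j := by
  obtain ⟨i, rfl⟩ : ∃ i', i = i' + 1 := ⟨i - 1, by omega⟩
  obtain ⟨j, rfl⟩ : ∃ j', j = j' + 1 := ⟨j - 1, by omega⟩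
  have hs := c.support_eq_cons
  have h1 := getVert_getElem? c hi
  have h2 := getVert_getElem? c hj
  rw [hs, List.getElem?_cons_succ] at h1 h2
  have hlen : c.support.tail.length = c.length := by
    have hls := c.length_support
    rw [hs] at hls ⊢
    simp only [List.length_cons, List.tail_cons] at hls ⊢
    omega
  have : i = j := by
    refine (List.getElem?_inj (l := c.support.tail) (by omega) hc.support_nodup).mp ?_
    rw [h1, h2, h]
  omega

end TreeSquareAux

theorem square_of_tree_chordal {V : Type*} (T : SimpleGraph V) (hT : T.IsTree) :
    T.square.IsChordal := by
  classical
  intro v c hc hlen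
  -- choose a vertex of the cycle at maximal tree-distance from `v`
  obtain ⟨u, huc', humax'⟩ := Finset.exists_max_image c.support.toFinset
    (fun w => T.dist v w) ⟨v, List.mem_toFinset.mpr c.start_mem_support⟩
  rw [List.mem_toFinset] at huc'
  have humax : ∀ w ∈ c.support, T.dist v w ≤ T.dist v u :=
    fun w hw => humax' w (List.mem_toFinset.mpr hw)
  set c' := c.rotate u huc' with hc'def
  have hcyc' : c'.IsCycle := hc.rotate huc'
  have hsub : c'.toSubgraph = c.toSubgraph := c.toSubgraph_rotate huc'
  have hsupp : ∀ w, w ∈ c'.support ↔ w ∈ c.support := by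
    intro w
    rw [← Walk.mem_verts_toSubgraph, hsub, Walk.mem_verts_toSubgraph]
  have hedge : ∀ e, e ∈ c'.edges ↔ e ∈ c.edges := by
    intro e
    rw [← Walk.mem_edges_toSubgraph, hsub, Walk.mem_edges_toSubgraph]
  have hlen' : c'.length = c.length := by
    have h := (c.rotate_edges u huc').perm.length_eq
    rwa [Walk.length_edges, Walk.length_edges] at h
  set n := c'.length with hn
  have hn4 : 4 ≤ n := by omega
  have hgetn : c'.getVert n = u := c'.getVert_length
  have hinj : ∀ i j, 1 ≤ i → i ≤ n → 1 ≤ j → j ≤ n → c'.getVert i = c'.getVert j → i = j :=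
    fun i j hi1 hi hj1 hj h => TreeSquareAux.getVert_inj_cycle hcyc' hi1 hi hj1 hj h
  set x := c'.getVert 1 with hx
  set y := c'.getVert (n - 1) with hy
  -- basic facts about x and y
  have hxadj : T.square.Adj u x := by
    have h := c'.adj_getVert_succ (i := 0) (by omega)
    rwa [c'.getVert_zero] at h
  have hyadj : T.square.Adj y u := by
    have h := c'.adj_getVert_succ (i := n - 1) (by omega)
    rwa [show n - 1 + 1 = n by omega, hgetn] at h
  have hxmem' : x ∈ c'.support := Walk.mem_support_iff_exists_getVert.mpr ⟨1, rfl, by omega⟩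
  have hymem' : y ∈ c'.support := Walk.mem_support_iff_exists_getVert.mpr ⟨n - 1, rfl, by omega⟩
  have hxmem : x ∈ c.support := (hsupp x).mp hxmem'
  have hymem : y ∈ c.support := (hsupp y).mp hymem'
  have hxu : x ≠ u := by
    intro h
    have := hinj 1 n (by omega) (by omega) (by omega) (by omega)
      (show c'.getVert 1 = c'.getVert n by rw [hgetn, ← hx]; exact h)
    omega
  have hyu : y ≠ u := by
    intro h
    have := hinj (n - 1) n (by omega) (by omega) (by omega) (by omega)
      (show c'.getVert (n - 1) = c'.getVert n by rw [hgetn, ← hy]; exact h)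
    omega
  have hxy : x ≠ y := by
    intro h
    have := hinj 1 (n - 1) (by omega) (by omega) (by omega) (by omega) h
    omega
  -- the chord is not an edge of the cycle
  have hchord : s(x, y) ∉ c.edges := by
    intro hmem
    rw [← hedge, ← Walk.mem_edges_toSubgraph, Subgraph.mem_edgeSet] at hmem
    obtain ⟨i, hi, hilt⟩ := (Walk.toSubgraph_adj_iff c').mp hmem
    rw [Sym2.eq_iff] at hi
    rcases hi with ⟨h1, h2⟩ | ⟨h1, h2⟩
    · have hi1 : i ≠ 0 := by
        intro h; rw [h, c'.getVert_zero] at h1; exact hxu h1.symm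
      have : i = 1 := hinj i 1 (by omega) (by omega) (by omega) (by omega) h1
      subst this
      have := hinj 2 (n - 1) (by omega) (by omega) (by omega) (by omega) h2
      omega
    · have hi1 : i ≠ 0 := by
        intro h; rw [h, c'.getVert_zero] at h1; exact hyu h1.symm
      have : i = n - 1 := hinj i (n - 1) (by omega) (by omega) (by omega) (by omega) h1
      subst this
      have := hinj n 1 (by omega) (by omega) (by omega) (by omega)
        (by rw [show n - 1 + 1 = n by omega] at h2; exact h2)
      omega
  -- tree side: both x and y lie in {p} ∪ N(p), where p is the parent of u
  have hconn := hT.isConnected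
  have hur : u ≠ v := by
    intro h
    have h1 : T.dist v x ≤ T.dist v u := humax x hxmem
    rw [h, SimpleGraph.dist_self] at h1
    exact hxu ((hconn.dist_eq_zero_iff.mp (Nat.le_zero.mp h1)).symm.trans h.symm)
  obtain ⟨p, hup, hdp⟩ := TreeSquareAux.parent_exists hT hur
  have key : ∀ w, T.square.Adj u w → w ∈ c.support → w ≠ u → w = p ∨ T.Adj p w := by
    intro w hadj hwmem hwu
    have hwd : T.dist v w ≤ T.dist v u := humax w hwmem
    rcases hadj.2 with h1 | ⟨m, hum, hmw⟩
    · rcases TreeSquareAux.adj_dist hT v h1 with h2 | h2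
      · omega
      · exact Or.inl (TreeSquareAux.parent_unique hT v h1 hup h2 hdp)
    · rcases TreeSquareAux.adj_dist hT v hum with h2 | h2
      · -- m is a child of u
        rcases TreeSquareAux.adj_dist hT v hmw with h3 | h3
        · omega
        · -- w is the parent of m, but so is u
          exfalso
          exact hwu (TreeSquareAux.parent_unique hT v hmw hum.symm h3 (by omega))
      · have : m = p := TreeSquareAux.parent_unique hT v hum hup h2 hdp
        exact Or.inr (this ▸ hmw)
  have hxp : x = p ∨ T.Adj p x := key x hxadj hxmem hxu
  have hyp : y = p ∨ T.Adj p y := key y hyadj.symm hymem hyu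
  refine ⟨x, y, hxmem, hymem, ?_, hchord⟩
  rcases hxp with h1 | h1
  · rcases hyp with h2 | h2
    · exact absurd (h1.trans h2.symm) hxy
    · exact ⟨hxy, Or.inl (show T.Adj x y by rw [h1]; exact h2)⟩
  · rcases hyp with h2 | h2
    · exact ⟨hxy, Or.inl (show T.Adj x y by rw [h2]; exact h1.symm)⟩
    · exact ⟨hxy, Or.inr ⟨p, h1.symm, h2⟩⟩
end

section
/- For i = 1,2 let G_i⁺ and G_i be t-tough graphs such that G_i = G_i⁺ − v_i for a vertex v_i of G_i⁺. Let U be obtained from the disjoint union of G_1 and G_2 by adding edges between them so that in the bipartite graph between N(v_1) (in G_1⁺) and N(v_2) (in G_2⁺) formed by the new edges, every vertex has degree at least t. Then U is t-tough. -/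
open SimpleGraph

/-- The graph obtained from the disjoint union of `G₁` and `G₂` by adding the edges
prescribed by the relation `R`. -/
def glueGraph {A B : Type*} (G₁ : SimpleGraph A) (G₂ : SimpleGraph B) (R : A → B → Prop) :
    SimpleGraph (A ⊕ B) where
  Adj a b := match a, b with
    | Sum.inl x, Sum.inl y => G₁.Adj x y
    | Sum.inr x, Sum.inr y => G₂.Adj x y
    | Sum.inl x, Sum.inr y => R x y
    | Sum.inr x, Sum.inl y => R y x
  symm := by
    constructor
    rintro (x | x) (y | y) h <;> simp only at h ⊢ <;>
      first | exact G₁.adj_symm h | exact G₂.adj_symm h | exact h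
  loopless := by
    constructor
    rintro (x | x) h <;> simp only at h <;>
      first | exact G₁.irrefl h | exact G₂.irrefl h

lemma myCCfin {W : Type*} [Finite W] (H : SimpleGraph W) : Finite H.ConnectedComponent :=
  Finite.of_surjective H.connectedComponentMk fun c => c.exists_rep

lemma reach_transfer {W : Type*} {H : SimpleGraph W} {p q : Set W}
    (hclosed : ∀ a b : W, H.Adj a b → a ∈ q → b ∈ q → a ∈ p → b ∈ p) :
    ∀ (u v : ↥q) (_ : (H.induce q).Walk u v) (hu : u.1 ∈ p) (hv : v.1 ∈ p),
      (H.induce p).Reachable ⟨u.1, hu⟩ ⟨v.1, hv⟩ := by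
  intro u v w
  induction w with
  | nil => intro hu hv; exact Reachable.refl _
  | @cons a b c hab w ih =>
      intro hu hv
      have hb : b.1 ∈ p := hclosed a.1 b.1 hab a.2 b.2 hu
      have hadj : (H.induce p).Adj ⟨a.1, hu⟩ ⟨b.1, hb⟩ := hab
      exact hadj.reachable.trans (ih hb hv)

lemma card_comp_le_of_surj {W W₂ : Type*} [Finite W₂] {H : SimpleGraph W} {H₂ : SimpleGraph W₂}
    (g : H₂ →g H) (hcov : ∀ w : W, ∃ b, H.Reachable (g b) w) :
    Nat.card H.ConnectedComponent ≤ Nat.card H₂.ConnectedComponent := by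
  haveI := myCCfin H₂
  refine Nat.card_le_card_of_surjective (ConnectedComponent.map g) ?_
  refine ConnectedComponent.ind fun w => ?_
  obtain ⟨b, hb⟩ := hcov w
  exact ⟨H₂.connectedComponentMk b, by
    rw [ConnectedComponent.map_mk]; exact ConnectedComponent.sound hb⟩

lemma card_comp_le_of_cover {W W₁ W₂ : Type*} [Finite W₁] [Finite W₂]
    {H : SimpleGraph W} {H₁ : SimpleGraph W₁} {H₂ : SimpleGraph W₂}
    (f : H₁ →g H) (g : H₂ →g H)
    (hcov : ∀ w : W, (∃ a, H.Reachable (f a) w) ∨ (∃ b, H.Reachable (g b) w)) :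
    Nat.card H.ConnectedComponent
      ≤ Nat.card H₁.ConnectedComponent + Nat.card H₂.ConnectedComponent := by
  haveI := myCCfin H₁; haveI := myCCfin H₂
  rw [← Nat.card_sum]
  refine Nat.card_le_card_of_surjective
    (Sum.elim (ConnectedComponent.map f) (ConnectedComponent.map g)) ?_
  refine ConnectedComponent.ind fun w => ?_
  rcases hcov w with ⟨a, ha⟩ | ⟨b, hb⟩
  · exact ⟨Sum.inl (H₁.connectedComponentMk a), by
      simp only [Sum.elim_inl, ConnectedComponent.map_mk]; exact ConnectedComponent.sound ha⟩
  · exact ⟨Sum.inr (H₂.connectedComponentMk b), by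
      simp only [Sum.elim_inr, ConnectedComponent.map_mk]; exact ConnectedComponent.sound hb⟩

lemma card_comp_add_one_le_of_overlap {W W₁ W₂ : Type*} [Finite W] [Finite W₁] [Finite W₂]
    {H : SimpleGraph W} {H₁ : SimpleGraph W₁} {H₂ : SimpleGraph W₂}
    (f : H₁ →g H) (g : H₂ →g H)
    (hcov : ∀ w : W, (∃ a, H.Reachable (f a) w) ∨ (∃ b, H.Reachable (g b) w))
    (a₀ : W₁) (b₀ : W₂) (hr : H.Reachable (f a₀) (g b₀)) :
    Nat.card H.ConnectedComponent + 1
      ≤ Nat.card H₁.ConnectedComponent + Nat.card H₂.ConnectedComponent := by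
  classical
  haveI := myCCfin H; haveI := myCCfin H₁; haveI := myCCfin H₂
  rw [← Nat.card_sum]
  have key : Nat.card (H.ConnectedComponent ⊕ Unit)
      ≤ Nat.card (H₁.ConnectedComponent ⊕ H₂.ConnectedComponent) := by
    refine Nat.card_le_card_of_surjective
      (fun z => match z with
        | Sum.inl k => Sum.inl (ConnectedComponent.map f k)
        | Sum.inr k => if ConnectedComponent.map g k = H.connectedComponentMk (g b₀)
            then Sum.inr () else Sum.inl (ConnectedComponent.map g k)) ?_
    rintro (c | u)
    · induction c using ConnectedComponent.ind with
      | _ w =>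
        rcases hcov w with ⟨a, ha⟩ | ⟨b, hb⟩
        · exact ⟨Sum.inl (H₁.connectedComponentMk a), by
            simp only [ConnectedComponent.map_mk]
            exact congrArg _ (ConnectedComponent.sound ha)⟩
        · by_cases hc : H.connectedComponentMk (g b) = H.connectedComponentMk (g b₀)
          · refine ⟨Sum.inl (H₁.connectedComponentMk a₀), ?_⟩
            simp only [ConnectedComponent.map_mk]
            have : H.connectedComponentMk (f a₀) = H.connectedComponentMk w :=
              (ConnectedComponent.sound hr).trans (hc.symm.trans (ConnectedComponent.sound hb))
            exact congrArg _ this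
          · refine ⟨Sum.inr (H₂.connectedComponentMk b), ?_⟩
            simp only [ConnectedComponent.map_mk, if_neg hc]
            exact (if_neg hc).trans (congrArg _ (ConnectedComponent.sound hb))
    · exact ⟨Sum.inr (H₂.connectedComponentMk b₀), by
        simp [ConnectedComponent.map_mk]⟩
  simpa [Nat.card_sum] using key

lemma card_comp_add_one_le_of_inj {W W₁ : Type*} [Finite W] [Finite W₁] {H : SimpleGraph W}
    {H₁ : SimpleGraph W₁} (f : H₁ →g H) (w₀ : W)
    (hinj : ∀ a b : W₁, H.Reachable (f a) (f b) → H₁.Reachable a b)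
    (hsep : ∀ a : W₁, ¬ H.Reachable (f a) w₀) :
    Nat.card H₁.ConnectedComponent + 1 ≤ Nat.card H.ConnectedComponent := by
  haveI := myCCfin H; haveI := myCCfin H₁
  have hne : ∀ k : H₁.ConnectedComponent,
      ConnectedComponent.map f k ≠ H.connectedComponentMk w₀ := by
    refine ConnectedComponent.ind fun a h => ?_
    rw [ConnectedComponent.map_mk] at h
    exact hsep a (ConnectedComponent.exact h)
  have key : Nat.card (H₁.ConnectedComponent ⊕ Unit) ≤ Nat.card H.ConnectedComponent := by
    refine Nat.card_le_card_of_injective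
      (fun z => match z with
        | Sum.inl k => ConnectedComponent.map f k
        | Sum.inr _ => H.connectedComponentMk w₀) ?_
    rintro (k | u) (k' | u') h
    · refine congrArg Sum.inl ?_
      induction k using ConnectedComponent.ind with
      | _ a =>
        induction k' using ConnectedComponent.ind with
        | _ b =>
          simp only [ConnectedComponent.map_mk] at h
          exact ConnectedComponent.sound (hinj a b (ConnectedComponent.exact h))
    · exact absurd h (hne k)
    · exact absurd h.symm (hne k')
    · rfl
  simpa [Nat.card_sum] using key

lemma ncard_sum_set {α β : Type*} [Finite α] [Finite β] (X : Set (α ⊕ β)) :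
    X.ncard = (Sum.inl ⁻¹' X).ncard + (Sum.inr ⁻¹' X).ncard := by
  have h : X = Sum.inl '' (Sum.inl ⁻¹' X) ∪ Sum.inr '' (Sum.inr ⁻¹' X) := by
    ext z; cases z <;> simp
  conv_lhs => rw [h]
  rw [Set.ncard_union_eq ?_ (Set.toFinite _) (Set.toFinite _),
    Set.ncard_image_of_injective _ Sum.inl_injective,
    Set.ncard_image_of_injective _ Sum.inr_injective]
  rw [Set.disjoint_left]
  rintro z ⟨a, _, rfl⟩ ⟨b, _, hz⟩
  exact Sum.inl_ne_inr hz.symm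

lemma isolated_reach {W : Type*} {H : SimpleGraph W} {u z : W} (h : ∀ x, ¬ H.Adj u x)
    (hr : H.Reachable u z) : z = u := by
  obtain ⟨w⟩ := hr
  cases w with
  | nil => rfl
  | cons h' p => exact absurd h' (h _)

theorem glue_tough {V₁ V₂ : Type*} [Fintype V₁] [Fintype V₂]
    [DecidableEq V₁] [DecidableEq V₂] (t : ℝ)
    (G₁p : SimpleGraph V₁) (G₂p : SimpleGraph V₂) (v₁ : V₁) (v₂ : V₂)
    (h1p : G₁p.ToughGE t) (h2p : G₂p.ToughGE t)
    (h1 : (G₁p.induce {x : V₁ | x ≠ v₁}).ToughGE t)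
    (h2 : (G₂p.induce {y : V₂ | y ≠ v₂}).ToughGE t)
    (R : {x : V₁ // x ≠ v₁} → {y : V₂ // y ≠ v₂} → Prop)
    (hR : ∀ x y, R x y → G₁p.Adj v₁ x ∧ G₂p.Adj v₂ y)
    (hdeg1 : ∀ x : {x : V₁ // x ≠ v₁}, G₁p.Adj v₁ x → t ≤ Set.ncard {y | R x y})
    (hdeg2 : ∀ y : {y : V₂ // y ≠ v₂}, G₂p.Adj v₂ y → t ≤ Set.ncard {x | R x y}) :
    (glueGraph (G₁p.induce {x : V₁ | x ≠ v₁}) (G₂p.induce {y : V₂ | y ≠ v₂}) R).ToughGE t := by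
  classical
  intro X hX
  set G₁ := G₁p.induce {x : V₁ | x ≠ v₁} with hG₁def
  set G₂ := G₂p.induce {y : V₂ | y ≠ v₂} with hG₂def
  set U := glueGraph G₁ G₂ R with hUdef
  set X₁ : Set ↥{x : V₁ | x ≠ v₁} := Sum.inl ⁻¹' X with hX₁def
  set X₂ : Set ↥{y : V₂ | y ≠ v₂} := Sum.inr ⁻¹' X with hX₂def
  set c : ℕ := Nat.card (U.induce Xᶜ).ConnectedComponent with hcdef
  set c₁ : ℕ := Nat.card (G₁.induce X₁ᶜ).ConnectedComponent with hc₁def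
  set c₂ : ℕ := Nat.card (G₂.induce X₂ᶜ).ConnectedComponent with hc₂def
  -- basic homs
  let hom₁ : (G₁.induce X₁ᶜ) →g (U.induce Xᶜ) :=
    ⟨fun a => ⟨Sum.inl a.1, a.2⟩, fun {a b} h => h⟩
  let hom₂ : (G₂.induce X₂ᶜ) →g (U.induce Xᶜ) :=
    ⟨fun a => ⟨Sum.inr a.1, a.2⟩, fun {a b} h => h⟩
  have hcov : ∀ w : ↥Xᶜ, (∃ a, (U.induce Xᶜ).Reachable (hom₁ a) w)
      ∨ (∃ b, (U.induce Xᶜ).Reachable (hom₂ b) w) := by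
    rintro ⟨(a | b), hz⟩
    · exact Or.inl ⟨⟨a, hz⟩, Reachable.refl _⟩
    · exact Or.inr ⟨⟨b, hz⟩, Reachable.refl _⟩
  have hF1 : c ≤ c₁ + c₂ := card_comp_le_of_cover hom₁ hom₂ hcov
  have hX5 : X.ncard = X₁.ncard + X₂.ncard := ncard_sum_set X
  rcases le_or_gt t 0 with ht | ht
  · have h0 : t * c ≤ 0 := mul_nonpos_of_nonpos_of_nonneg ht (Nat.cast_nonneg _)
    exact h0.trans (Nat.cast_nonneg _)
  -- t > 0 now
  have hXr : (X.ncard : ℝ) = X₁.ncard + X₂.ncard := by exact_mod_cast hX5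
  have hX₂le : (X₂.ncard : ℝ) ≤ X.ncard := by
    have : X₂.ncard ≤ X.ncard := hX5 ▸ Nat.le_add_left _ _
    exact_mod_cast this
  have hX₁le : (X₁.ncard : ℝ) ≤ X.ncard := by
    have : X₁.ncard ≤ X.ncard := hX5 ▸ Nat.le_add_right _ _
    exact_mod_cast this
  -- generic tails
  have right_up : (∀ w : ↥Xᶜ, ∃ b, (U.induce Xᶜ).Reachable (hom₂ b) w) → t * c ≤ X.ncard := by
    intro hc2
    have hle : c ≤ c₂ := card_comp_le_of_surj hom₂ hc2
    have h2' := h2 X₂ (lt_of_lt_of_le hX hle)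
    have : t * c ≤ t * c₂ :=
      mul_le_mul_of_nonneg_left (by exact_mod_cast hle) ht.le
    calc t * c ≤ t * c₂ := this
      _ ≤ X₂.ncard := h2'
      _ ≤ X.ncard := hX₂le
  have left_up : (∀ w : ↥Xᶜ, ∃ a, (U.induce Xᶜ).Reachable (hom₁ a) w) → t * c ≤ X.ncard := by
    intro hc1
    have hle : c ≤ c₁ := card_comp_le_of_surj hom₁ hc1
    have h1' := h1 X₁ (lt_of_lt_of_le hX hle)
    have : t * c ≤ t * c₁ :=
      mul_le_mul_of_nonneg_left (by exact_mod_cast hle) ht.le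
    calc t * c ≤ t * c₁ := this
      _ ≤ X₁.ncard := h1'
      _ ≤ X.ncard := hX₁le
  by_cases hP₁ : ∀ x : {x : V₁ // x ≠ v₁}, G₁p.Adj v₁ x → Sum.inl x ∈ X
  · -- no surviving neighbour of v₁ on the left
    by_cases hL : ∀ a : ↥{x : V₁ | x ≠ v₁}, Sum.inl a ∈ X
    · refine right_up ?_
      rintro ⟨(a | b), hz⟩
      · exact absurd (hL a) hz
      · exact ⟨⟨b, hz⟩, Reachable.refl _⟩
    · push_neg at hL
      obtain ⟨a₀, ha₀⟩ := hL
      -- left side counting via G₁p with cut X₁'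
      set X₁' : Set V₁ := Subtype.val '' X₁ with hX₁'def
      have hv₁ : v₁ ∈ X₁'ᶜ := by
        rintro ⟨b, _, hbe⟩; exact b.2 hbe
      let f : (G₁.induce X₁ᶜ) →g (G₁p.induce X₁'ᶜ) :=
        ⟨fun a => ⟨a.1.1, fun hmem => by
          obtain ⟨b, hbX, hbe⟩ := hmem
          exact a.2 (Subtype.val_injective hbe ▸ hbX)⟩, fun {a b} h => h⟩
      have hiso : ∀ u, ¬ (G₁p.induce X₁'ᶜ).Adj ⟨v₁, hv₁⟩ u := by
        intro u hadj
        have hadj' : G₁p.Adj v₁ u.1 := hadj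
        have hne : u.1 ≠ v₁ := fun e => G₁p.irrefl (e ▸ hadj')
        have hmem : Sum.inl (⟨u.1, hne⟩ : {x : V₁ // x ≠ v₁}) ∈ X := hP₁ ⟨u.1, hne⟩ hadj'
        exact u.2 ⟨⟨u.1, hne⟩, hmem, rfl⟩
      have hsep : ∀ a, ¬ (G₁p.induce X₁'ᶜ).Reachable (f a) ⟨v₁, hv₁⟩ := by
        intro a hr
        have := isolated_reach hiso hr.symm
        exact a.1.2 (congrArg Subtype.val this)
      have hinj : ∀ a b, (G₁p.induce X₁'ᶜ).Reachable (f a) (f b) →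
          (G₁.induce X₁ᶜ).Reachable a b := by
        intro a b hr
        obtain ⟨w⟩ := hr
        have hclosed : ∀ x y : V₁, G₁p.Adj x y → x ∈ X₁'ᶜ → y ∈ X₁'ᶜ →
            x ∈ {z : V₁ | z ∉ X₁' ∧ z ≠ v₁} → y ∈ {z : V₁ | z ∉ X₁' ∧ z ≠ v₁} := by
          intro x y hadj hxq hyq hxp
          refine ⟨hyq, ?_⟩
          rintro rfl
          have hne : x ≠ y := fun e => G₁p.irrefl (e ▸ hadj)
          have : Sum.inl (⟨x, hne⟩ : {z : V₁ // z ≠ y}) ∈ X := hP₁ ⟨x, hne⟩ hadj.symm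
          exact hxq ⟨⟨x, hne⟩, this, rfl⟩
        have key := reach_transfer (H := G₁p) (p := {z : V₁ | z ∉ X₁' ∧ z ≠ v₁})
          (q := X₁'ᶜ) hclosed (f a) (f b) w ⟨(f a).2, a.1.2⟩ ⟨(f b).2, b.1.2⟩
        let g₂ : (G₁p.induce {z : V₁ | z ∉ X₁' ∧ z ≠ v₁}) →g (G₁.induce X₁ᶜ) :=
          ⟨fun z => ⟨⟨z.1, z.2.2⟩, fun hmem => z.2.1 ⟨⟨z.1, z.2.2⟩, hmem, rfl⟩⟩,
            fun {x y} h => h⟩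
        exact key.map g₂
      have hinjlem := card_comp_add_one_le_of_inj f ⟨v₁, hv₁⟩ hinj hsep
      have hc₁pos : 0 < c₁ := by
        have : Nonempty ↥X₁ᶜ := ⟨⟨a₀, ha₀⟩⟩
        haveI : Nonempty (G₁.induce X₁ᶜ).ConnectedComponent :=
          ⟨(G₁.induce X₁ᶜ).connectedComponentMk this.some⟩
        haveI := myCCfin (G₁.induce X₁ᶜ)
        exact Nat.card_pos
      have h1p' := h1p X₁' (by omega)
      have hX₁'card : X₁'.ncard = X₁.ncard :=
        Set.ncard_image_of_injective _ Subtype.val_injective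
      have ht1 : t * (c₁ + 1 : ℕ) ≤ X₁.ncard := by
        calc t * (c₁ + 1 : ℕ)
            ≤ t * Nat.card (G₁p.induce X₁'ᶜ).ConnectedComponent :=
              mul_le_mul_of_nonneg_left (by exact_mod_cast hinjlem) ht.le
          _ ≤ X₁'.ncard := h1p'
          _ = X₁.ncard := by rw [hX₁'card]
      have ht2 : t * c₂ ≤ X₂.ncard + t := by
        rcases lt_or_ge 1 c₂ with h' | h'
        · have := h2 X₂ h'
          linarith [ht.le]
        · have : (c₂ : ℝ) ≤ 1 := by exact_mod_cast h'
          have hnn : (0:ℝ) ≤ X₂.ncard := Nat.cast_nonneg _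
          nlinarith
      have hcast : (c : ℝ) ≤ c₁ + c₂ := by exact_mod_cast hF1
      have : t * c ≤ t * (c₁ + c₂) := mul_le_mul_of_nonneg_left hcast ht.le
      push_cast at ht1
      nlinarith
  · -- some neighbour of v₁ survives
    by_cases hP₂ : ∀ y : {y : V₂ // y ≠ v₂}, G₂p.Adj v₂ y → Sum.inr y ∈ X
    · -- no surviving neighbour of v₂ on the right
      by_cases hL : ∀ b : ↥{y : V₂ | y ≠ v₂}, Sum.inr b ∈ X
      · refine left_up ?_
        rintro ⟨(a | b), hz⟩
        · exact ⟨⟨a, hz⟩, Reachable.refl _⟩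
        · exact absurd (hL b) hz
      · push_neg at hL
        obtain ⟨b₀, hb₀⟩ := hL
        set X₂' : Set V₂ := Subtype.val '' X₂ with hX₂'def
        have hv₂ : v₂ ∈ X₂'ᶜ := by
          rintro ⟨b, _, hbe⟩; exact b.2 hbe
        let f : (G₂.induce X₂ᶜ) →g (G₂p.induce X₂'ᶜ) :=
          ⟨fun a => ⟨a.1.1, fun hmem => by
            obtain ⟨b, hbX, hbe⟩ := hmem
            exact a.2 (Subtype.val_injective hbe ▸ hbX)⟩, fun {a b} h => h⟩
        have hiso : ∀ u, ¬ (G₂p.induce X₂'ᶜ).Adj ⟨v₂, hv₂⟩ u := by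
          intro u hadj
          have hadj' : G₂p.Adj v₂ u.1 := hadj
          have hne : u.1 ≠ v₂ := fun e => G₂p.irrefl (e ▸ hadj')
          have hmem : Sum.inr (⟨u.1, hne⟩ : {y : V₂ // y ≠ v₂}) ∈ X := hP₂ ⟨u.1, hne⟩ hadj'
          exact u.2 ⟨⟨u.1, hne⟩, hmem, rfl⟩
        have hsep : ∀ a, ¬ (G₂p.induce X₂'ᶜ).Reachable (f a) ⟨v₂, hv₂⟩ := by
          intro a hr
          have := isolated_reach hiso hr.symm
          exact a.1.2 (congrArg Subtype.val this)
        have hinj : ∀ a b, (G₂p.induce X₂'ᶜ).Reachable (f a) (f b) →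
            (G₂.induce X₂ᶜ).Reachable a b := by
          intro a b hr
          obtain ⟨w⟩ := hr
          have hclosed : ∀ x y : V₂, G₂p.Adj x y → x ∈ X₂'ᶜ → y ∈ X₂'ᶜ →
              x ∈ {z : V₂ | z ∉ X₂' ∧ z ≠ v₂} → y ∈ {z : V₂ | z ∉ X₂' ∧ z ≠ v₂} := by
            intro x y hadj hxq hyq hxp
            refine ⟨hyq, ?_⟩
            rintro rfl
            have hne : x ≠ y := fun e => G₂p.irrefl (e ▸ hadj)
            have : Sum.inr (⟨x, hne⟩ : {z : V₂ // z ≠ y}) ∈ X := hP₂ ⟨x, hne⟩ hadj.symm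
            exact hxq ⟨⟨x, hne⟩, this, rfl⟩
          have key := reach_transfer (H := G₂p) (p := {z : V₂ | z ∉ X₂' ∧ z ≠ v₂})
            (q := X₂'ᶜ) hclosed (f a) (f b) w ⟨(f a).2, a.1.2⟩ ⟨(f b).2, b.1.2⟩
          let g₂ : (G₂p.induce {z : V₂ | z ∉ X₂' ∧ z ≠ v₂}) →g (G₂.induce X₂ᶜ) :=
            ⟨fun z => ⟨⟨z.1, z.2.2⟩, fun hmem => z.2.1 ⟨⟨z.1, z.2.2⟩, hmem, rfl⟩⟩,
              fun {x y} h => h⟩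
          exact key.map g₂
        have hinjlem := card_comp_add_one_le_of_inj f ⟨v₂, hv₂⟩ hinj hsep
        have hc₂pos : 0 < c₂ := by
          have : Nonempty ↥X₂ᶜ := ⟨⟨b₀, hb₀⟩⟩
          haveI : Nonempty (G₂.induce X₂ᶜ).ConnectedComponent :=
            ⟨(G₂.induce X₂ᶜ).connectedComponentMk this.some⟩
          haveI := myCCfin (G₂.induce X₂ᶜ)
          exact Nat.card_pos
        have h2p' := h2p X₂' (by omega)
        have hX₂'card : X₂'.ncard = X₂.ncard :=
          Set.ncard_image_of_injective _ Subtype.val_injective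
        have ht2 : t * (c₂ + 1 : ℕ) ≤ X₂.ncard := by
          calc t * (c₂ + 1 : ℕ)
              ≤ t * Nat.card (G₂p.induce X₂'ᶜ).ConnectedComponent :=
                mul_le_mul_of_nonneg_left (by exact_mod_cast hinjlem) ht.le
            _ ≤ X₂'.ncard := h2p'
            _ = X₂.ncard := by rw [hX₂'card]
        have ht1 : t * c₁ ≤ X₁.ncard + t := by
          rcases lt_or_ge 1 c₁ with h' | h'
          · have := h1 X₁ h'
            linarith [ht.le]
          · have : (c₁ : ℝ) ≤ 1 := by exact_mod_cast h'
            have hnn : (0:ℝ) ≤ X₁.ncard := Nat.cast_nonneg _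
            nlinarith
        have hcast : (c : ℝ) ≤ c₁ + c₂ := by exact_mod_cast hF1
        have : t * c ≤ t * (c₁ + c₂) := mul_le_mul_of_nonneg_left hcast ht.le
        push_cast at ht2
        nlinarith
    · -- both sides have surviving neighbours
      push_neg at hP₁ hP₂
      obtain ⟨x₀, hadj₀, hx₀⟩ := hP₁
      obtain ⟨y₀, hadj₀', hy₀⟩ := hP₂
      by_cases hE : ∃ (x : {x : V₁ // x ≠ v₁}) (y : {y : V₂ // y ≠ v₂}),
          R x y ∧ Sum.inl x ∉ X ∧ Sum.inr y ∉ X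
      · obtain ⟨x₁, y₁, hR₁, hx₁, hy₁⟩ := hE
        have hadj : (U.induce Xᶜ).Adj ⟨Sum.inl x₁, hx₁⟩ ⟨Sum.inr y₁, hy₁⟩ := hR₁
        rcases le_or_gt c₁ 1 with hle1 | hgt1
        · refine right_up ?_
          haveI := myCCfin (G₁.induce X₁ᶜ)
          have hss : Subsingleton (G₁.induce X₁ᶜ).ConnectedComponent :=
            Finite.card_le_one_iff_subsingleton.mp hle1
          rintro ⟨(a | b), hz⟩
          · have heq : (G₁.induce X₁ᶜ).connectedComponentMk ⟨a, hz⟩ =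
                (G₁.induce X₁ᶜ).connectedComponentMk ⟨x₁, hx₁⟩ := Subsingleton.elim _ _
            have hra := ConnectedComponent.exact heq
            have hmap := hra.map hom₁
            exact ⟨⟨y₁, hy₁⟩, hadj.symm.reachable.trans hmap.symm⟩
          · exact ⟨⟨b, hz⟩, Reachable.refl _⟩
        rcases le_or_gt c₂ 1 with hle2 | hgt2
        · refine left_up ?_
          haveI := myCCfin (G₂.induce X₂ᶜ)
          have hss : Subsingleton (G₂.induce X₂ᶜ).ConnectedComponent :=
            Finite.card_le_one_iff_subsingleton.mp hle2
          rintro ⟨(a | b), hz⟩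
          · exact ⟨⟨a, hz⟩, Reachable.refl _⟩
          · have heq : (G₂.induce X₂ᶜ).connectedComponentMk ⟨b, hz⟩ =
                (G₂.induce X₂ᶜ).connectedComponentMk ⟨y₁, hy₁⟩ := Subsingleton.elim _ _
            have hra := ConnectedComponent.exact heq
            have hmap := hra.map hom₂
            exact ⟨⟨x₁, hx₁⟩, hadj.reachable.trans hmap.symm⟩
        · have hov := card_comp_add_one_le_of_overlap hom₁ hom₂ hcov
            ⟨x₁, hx₁⟩ ⟨y₁, hy₁⟩ hadj.reachable
          have t1 := h1 X₁ hgt1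
          have t2 := h2 X₂ hgt2
          have hcast : (c : ℝ) + 1 ≤ c₁ + c₂ := by exact_mod_cast hov
          have hmul : t * ((c : ℝ) + 1) ≤ t * ((c₁ : ℝ) + c₂) :=
            mul_le_mul_of_nonneg_left hcast ht.le
          have e1 : t * ((c : ℝ) + 1) = t * c + t := by ring
          have e2 : t * ((c₁ : ℝ) + c₂) = t * c₁ + t * c₂ := by ring
          linarith
      · -- no surviving glue edge
        have hsub2 : {y | R x₀ y} ⊆ X₂ := by
          intro y hy
          by_contra hyX
          exact hE ⟨x₀, y, hy, hx₀, hyX⟩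
        have hsub1 : {x | R x y₀} ⊆ X₁ := by
          intro x hx
          by_contra hxX
          exact hE ⟨x, y₀, hx, hxX, hy₀⟩
        have htX₂ : t ≤ (X₂.ncard : ℝ) := by
          refine (hdeg1 x₀ hadj₀).trans ?_
          exact_mod_cast Set.ncard_le_ncard hsub2 (Set.toFinite _)
        have htX₁ : t ≤ (X₁.ncard : ℝ) := by
          refine (hdeg2 y₀ hadj₀').trans ?_
          exact_mod_cast Set.ncard_le_ncard hsub1 (Set.toFinite _)
        have ht1 : t * c₁ ≤ X₁.ncard := by
          rcases lt_or_ge 1 c₁ with h' | h'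
          · exact h1 X₁ h'
          · have : (c₁ : ℝ) ≤ 1 := by exact_mod_cast h'
            nlinarith
        have ht2 : t * c₂ ≤ X₂.ncard := by
          rcases lt_or_ge 1 c₂ with h' | h'
          · exact h2 X₂ h'
          · have : (c₂ : ℝ) ≤ 1 := by exact_mod_cast h'
            nlinarith
        have hcast : (c : ℝ) ≤ c₁ + c₂ := by exact_mod_cast hF1
        have hmul : t * (c : ℝ) ≤ t * ((c₁ : ℝ) + c₂) :=
          mul_le_mul_of_nonneg_left hcast ht.le
        have e2 : t * ((c₁ : ℝ) + c₂) = t * c₁ + t * c₂ := by ring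
        linarith
end
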